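/- arXiv:2005.09505 — 3 statements merged into one kernel-verified Lean document; each statement's English description precedes it below -/
import Mathlib

section
/- Let Ω ⊆ ℂⁿ be a bounded domain, let u ∈ ℳ and let 0 < α < 1. Then the function u^α is tame. -/
open Complex Polynomial Filter Set Topology

noncomputable section

/-- `u` is plurisubharmonic on `Ω ⊆ ℂⁿ`: it is upper semicontinuous on `Ω`, takes values in
`[-∞, ∞)`, is not identically `-∞`, and on every closed disc of every complex line contained
in `Ω` it satisfies the maximum principle against real parts of complex polynomials
(an equivalent formulation of subharmonicity of the restriction to every complex line). -/
def IsPSH {n : ℕ} (Ω : Set (Fin n → ℂ)) (u : (Fin n → ℂ) → EReal) : Prop :=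
  UpperSemicontinuousOn u Ω ∧
  (∀ z ∈ Ω, u z ≠ ⊤) ∧
  (∃ z ∈ Ω, u z ≠ ⊥) ∧
  ∀ z ∈ Ω, ∀ w : Fin n → ℂ, ∀ r : ℝ, 0 < r →
    (∀ ζ : ℂ, ‖ζ‖ ≤ r → z + ζ • w ∈ Ω) →
    ∀ p : Polynomial ℂ,
      (∀ ζ : ℂ, ‖ζ‖ = r → u (z + ζ • w) ≤ (((p.eval ζ).re : ℝ) : EReal)) →
      ∀ ζ : ℂ, ‖ζ‖ ≤ r → u (z + ζ • w) ≤ (((p.eval ζ).re : ℝ) : EReal)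

/-- `v` is plurisuperharmonic on `Ω` iff `-v` is plurisubharmonic on `Ω`. -/
def IsPSupH {n : ℕ} (Ω : Set (Fin n → ℂ)) (v : (Fin n → ℂ) → EReal) : Prop :=
  IsPSH Ω (fun z => -(v z))

/-- `f` belongs to the class `ℳ`: `f : Ω → [0, +∞]` admits a plurisuperharmonic
majorant on `Ω`. -/
def MemM {n : ℕ} (Ω : Set (Fin n → ℂ)) (f : (Fin n → ℂ) → EReal) : Prop :=
  (∀ z ∈ Ω, 0 ≤ f z) ∧ ∃ v, IsPSupH Ω v ∧ ∀ z ∈ Ω, f z ≤ v z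

/-- The reduced function `R_λ f`: the pointwise infimum of all plurisuperharmonic
majorants of `(f - λ)⁺ = max {f - λ, 0}` on `Ω`. -/
def Rop {n : ℕ} (Ω : Set (Fin n → ℂ)) (f : (Fin n → ℂ) → EReal) (lam : ℝ)
    (z : Fin n → ℂ) : EReal :=
  sInf { y | ∃ v, IsPSupH Ω v ∧ (∀ ζ ∈ Ω, max (f ζ - (lam : EReal)) 0 ≤ v ζ) ∧ y = v z }

/-- Lower semicontinuous regularization of `g` relative to the set `A`:
`g_*(z) = liminf_{A ∋ ζ → z} g(ζ)`. -/
def lscReg {n : ℕ} (A : Set (Fin n → ℂ)) (g : (Fin n → ℂ) → EReal)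
    (z : Fin n → ℂ) : EReal :=
  liminf g (nhdsWithin z A)

/-- Upper semicontinuous regularization of `g` relative to the set `A`:
`g*(z) = limsup_{A ∋ ζ → z} g(ζ)`. -/
def uscReg {n : ℕ} (A : Set (Fin n → ℂ)) (g : (Fin n → ℂ) → EReal)
    (z : Fin n → ℂ) : EReal :=
  limsup g (nhdsWithin z A)

/-- `S_λ f`: the lower semicontinuous regularization of `R_λ f` on `Ω`. -/
def Slam {n : ℕ} (Ω : Set (Fin n → ℂ)) (f : (Fin n → ℂ) → EReal) (lam : ℝ) :
    (Fin n → ℂ) → EReal :=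
  lscReg Ω (Rop Ω f lam)

/-- The operator `S`: the lower semicontinuous regularization of
`lim_{λ → ∞} S_λ f`; since `λ ↦ S_λ f` is decreasing on `λ ≥ 0`, this limit is the
infimum over `λ ≥ 0`. -/
def Sop {n : ℕ} (Ω : Set (Fin n → ℂ)) (f : (Fin n → ℂ) → EReal) :
    (Fin n → ℂ) → EReal :=
  lscReg Ω (fun z => ⨅ (lam : ℝ) (_ : 0 ≤ lam), Slam Ω f lam z)

/-- `f` is tame on `Ω` if `S f ≡ 0`. -/
def Tame {n : ℕ} (Ω : Set (Fin n → ℂ)) (f : (Fin n → ℂ) → EReal) : Prop :=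
  ∀ z ∈ Ω, Sop Ω f z = 0

/-- `E` is a pluripolar subset of `Ω`: `E ⊆ {w = -∞}` for some plurisubharmonic `w` on `Ω`. -/
def Pluripolar {n : ℕ} (Ω : Set (Fin n → ℂ)) (E : Set (Fin n → ℂ)) : Prop :=
  E ⊆ Ω ∧ ∃ w, IsPSH Ω w ∧ ∀ z ∈ E, w z = ⊥

/-- The power `x ^ α` for `x ∈ [0, +∞] ⊆ EReal` and a real exponent `α`. -/
def erealRpow (x : EReal) (α : ℝ) : EReal :=
  if x = ⊤ then ⊤ else ((x.toReal ^ α : ℝ) : EReal)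

-- real part identities
lemma re_div_eq (z v : ℂ) : (z / v).re = (z * (starRingEnd ℂ) v).re / Complex.normSq v := by
  rw [div_eq_mul_inv, Complex.inv_def]
  simp [Complex.mul_re, Complex.mul_im, Complex.div_re]
  ring

lemma re_one_add_div_one_sub (w : ℂ) :
    ((1 + w) / (1 - w)).re = (1 - Complex.normSq w) / Complex.normSq (1 - w) := by
  rw [re_div_eq]
  congr 1
  simp [Complex.mul_re, Complex.normSq_apply, Complex.sub_re, Complex.add_re, Complex.conj_re,
    Complex.conj_im]
  ring


lemma usc_circle_bound {n : ℕ} {Ω : Set (Fin n → ℂ)} (hΩo : IsOpen Ω)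
    {w : (Fin n → ℂ) → EReal} (husc : UpperSemicontinuousOn w Ω)
    (hnt : ∀ z ∈ Ω, w z ≠ ⊤) (z' d : Fin n → ℂ)
    (hmem : ∀ ζ : ℂ, ‖ζ‖ = 1 → z' + ζ • d ∈ Ω) :
    ∃ M : ℝ, ∀ ζ : ℂ, ‖ζ‖ = 1 → w (z' + ζ • d) ≤ (M : EReal) := by
  set φ : ℂ → (Fin n → ℂ) := fun ζ => z' + ζ • d with hφdef
  have hφ : Continuous φ := continuous_const.add (continuous_id.smul continuous_const)
  set K : Set ℂ := Metric.sphere (0:ℂ) 1 with hKdef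
  have hK : IsCompact K := isCompact_sphere _ _
  set W : ℚ → Set ℂ := fun q => interior {ζ | w (φ ζ) ≤ ((q : ℝ) : EReal)} with hWdef
  have hcover : K ⊆ ⋃ q : ℚ, W q := by
    intro ζ hζ
    have hζn : ‖ζ‖ = 1 := by simpa [hKdef] using hζ
    have hx : φ ζ ∈ Ω := hmem ζ hζn
    have hlt : w (φ ζ) < ⊤ := (hnt _ hx).lt_top
    obtain ⟨b, hb1, -⟩ := EReal.exists_between_coe_real hlt
    have hev : ∀ᶠ x' in 𝓝[Ω] (φ ζ), w x' < (b : EReal) := husc _ hx _ hb1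
    rw [nhdsWithin_eq_nhds.mpr (hΩo.mem_nhds hx)] at hev
    have hev2 : ∀ᶠ ζ' in 𝓝 ζ, w (φ ζ') < (b : EReal) := (hφ.continuousAt).eventually hev
    obtain ⟨q, hq⟩ := exists_rat_gt b
    refine mem_iUnion.2 ⟨q, ?_⟩
    rw [hWdef]
    rw [mem_interior_iff_mem_nhds]
    filter_upwards [hev2] with ζ' h
    exact le_of_lt (h.trans (by exact_mod_cast hq))
  obtain ⟨t, ht⟩ := hK.elim_finite_subcover W (fun q => isOpen_interior) hcover
  have h1K : (1:ℂ) ∈ K := by simp [hKdef]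
  have htne : t.Nonempty := by
    rcases Finset.eq_empty_or_nonempty t with h | h
    · exfalso; have := ht h1K; simp [h] at this
    · exact h
  refine ⟨((t.max' htne : ℚ) : ℝ), ?_⟩
  intro ζ hζn
  have hζ : ζ ∈ K := by simp [hKdef, hζn]
  obtain ⟨q, hqt, hq⟩ := by simpa using ht hζ
  have h1 : w (φ ζ) ≤ ((q : ℝ) : EReal) := by
    have := interior_subset (s := {ζ | w (φ ζ) ≤ ((q : ℝ) : EReal)}) hq
    exact this
  refine h1.trans ?_
  have : (q : ℝ) ≤ ((t.max' htne : ℚ) : ℝ) := by exact_mod_cast t.le_max' q hqt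
  exact_mod_cast this


/-- Multiplication by a positive real as an order isomorphism of `EReal`. -/
noncomputable def erealMulIso (c : ℝ) (hc : 0 < c) : EReal ≃o EReal where
  toFun x := (c : EReal) * x
  invFun x := (c⁻¹ : ℝ) * x
  left_inv x := by
    show (c⁻¹ : ℝ) * ((c : EReal) * x) = x
    rw [← mul_assoc, ← EReal.coe_mul, inv_mul_cancel₀ hc.ne', EReal.coe_one, one_mul]
  right_inv x := by
    show (c : EReal) * ((c⁻¹ : ℝ) * x) = x
    rw [← mul_assoc, ← EReal.coe_mul, mul_inv_cancel₀ hc.ne', EReal.coe_one, one_mul]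
  map_rel_iff' := by
    intro x y
    show (c : EReal) * x ≤ (c : EReal) * y ↔ x ≤ y
    constructor
    · intro h
      have := mul_le_mul_of_nonneg_left h
        (le_of_lt (by exact_mod_cast inv_pos.2 hc : (0:EReal) < (c⁻¹ : ℝ)))
      rwa [← mul_assoc, ← mul_assoc, ← EReal.coe_mul, inv_mul_cancel₀ hc.ne', EReal.coe_one,
        one_mul, one_mul] at this
    · intro h
      exact mul_le_mul_of_nonneg_left h (le_of_lt (by exact_mod_cast hc))

lemma ereal_mul_coe_le_coe_iff (c : ℝ) (hc : 0 < c) (x : EReal) (y : ℝ) :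
    (c : EReal) * x ≤ (y : EReal) ↔ x ≤ ((c⁻¹ * y : ℝ) : EReal) := by
  have h : ((y : ℝ) : EReal) = (c : EReal) * ((c⁻¹ * y : ℝ) : EReal) := by
    rw [← EReal.coe_mul]
    congr 1
    field_simp
  rw [h]
  exact (erealMulIso c hc).le_iff_le (x := x) (y := ((c⁻¹ * y : ℝ) : EReal))

lemma ereal_mul_ne_top (c : ℝ) (hc : 0 < c) (x : EReal) (hx : x ≠ ⊤) : (c:EReal) * x ≠ ⊤ := by
  intro h
  apply hx
  have := congrArg (erealMulIso c hc).symm (show erealMulIso c hc x = ⊤ from h)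
  rw [OrderIso.symm_apply_apply] at this
  rw [this, OrderIso.map_top (erealMulIso c hc).symm]

lemma ereal_mul_ne_bot (c : ℝ) (hc : 0 < c) (x : EReal) (hx : x ≠ ⊥) : (c:EReal) * x ≠ ⊥ := by
  intro h
  apply hx
  have := congrArg (erealMulIso c hc).symm (show erealMulIso c hc x = ⊥ from h)
  rw [OrderIso.symm_apply_apply] at this
  rw [this, OrderIso.map_bot (erealMulIso c hc).symm]

/-- A positive real multiple of a plurisuperharmonic function is plurisuperharmonic. -/
lemma IsPSupH.const_smul {n : ℕ} {Ω : Set (Fin n → ℂ)} {v : (Fin n → ℂ) → EReal}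
    (hv : IsPSupH Ω v) {c : ℝ} (hc : 0 < c) :
    IsPSupH Ω (fun z => (c : EReal) * v z) := by
  obtain ⟨husc, hnt, hnb, hmp⟩ := hv
  have hfun : (fun z => -((c : EReal) * v z)) = (fun z => (c : EReal) * (-(v z))) := by
    funext z
    rw [mul_neg]
  refine ⟨?_, ?_, ?_, ?_⟩ <;> rw [hfun]
  · exact Continuous.comp_upperSemicontinuousOn
      ((erealMulIso c hc).toHomeomorph.continuous) husc (erealMulIso c hc).monotone
  · intro z hz
    exact ereal_mul_ne_top c hc _ (hnt z hz)
  · obtain ⟨z, hz, hzb⟩ := hnb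
    exact ⟨z, hz, ereal_mul_ne_bot c hc _ hzb⟩
  · intro z hz d r hr hmem p hcirc ζ hζ
    have hq : ∀ ξ : ℂ, (((Polynomial.C ((c⁻¹:ℝ):ℂ) * p).eval ξ).re : EReal)
        = ((c⁻¹ * (p.eval ξ).re : ℝ) : EReal) := by
      intro ξ
      rw [Polynomial.eval_mul, Polynomial.eval_C, Complex.re_ofReal_mul]
    have happ := hmp z hz d r hr hmem (Polynomial.C ((c⁻¹:ℝ):ℂ) * p) ?_ ζ hζ
    · rw [hq] at happ
      show (c : EReal) * (-(v (z + ζ • d))) ≤ _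
      exact (ereal_mul_coe_le_coe_iff c hc _ _).2 happ
    · intro ξ hξ
      rw [hq]
      have h2 := hcirc ξ hξ
      exact (ereal_mul_coe_le_coe_iff c hc _ _).1 h2

/-- The elementary inequality `x^α ≤ ε x + λ_ε`. -/
lemma rpow_le_linear {α : ℝ} (hα0 : 0 < α) (hα1 : α < 1) {ε : ℝ} (hε : 0 < ε) :
    ∃ lam : ℝ, 0 ≤ lam ∧ ∀ x : ℝ, 0 ≤ x → x ^ α ≤ ε * x + lam := by
  set X₀ : ℝ := ε ^ (-(1-α)⁻¹) with hX₀def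
  have hX₀ : 0 < X₀ := Real.rpow_pos_of_pos hε _
  refine ⟨X₀ ^ α, (Real.rpow_pos_of_pos hX₀ α).le, ?_⟩
  intro x hx
  by_cases hxX : x ≤ X₀
  · have := Real.rpow_le_rpow hx hxX hα0.le
    nlinarith [mul_nonneg hε.le hx]
  · push_neg at hxX
    have hx0 : 0 < x := hX₀.trans hxX
    have key : x ^ (α - 1) ≤ ε := by
      have h1 : x ^ (α-1) ≤ X₀ ^ (α-1) :=
        Real.rpow_le_rpow_of_nonpos hX₀ hxX.le (by linarith)
      have h1α : (1:ℝ) - α ≠ 0 := by linarith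
      have h2 : X₀ ^ (α-1) = ε := by
        rw [hX₀def, ← Real.rpow_mul hε.le]
        rw [show -(1-α)⁻¹ * (α-1) = 1 by field_simp; ring]
        exact Real.rpow_one ε
      linarith
    have h3 : x ^ α = x ^ (α-1) * x := by
      rw [← Real.rpow_add_one hx0.ne' (α-1)]
      norm_num
    have h4 : x ^ (α-1) * x ≤ ε * x := mul_le_mul_of_nonneg_right key hx0.le
    nlinarith [Real.rpow_pos_of_pos hX₀ α]


set_option maxHeartbeats 1000000 in
lemma bot_propagation {n : ℕ} {Ω : Set (Fin n → ℂ)} (hΩo : IsOpen Ω)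
    {w : (Fin n → ℂ) → EReal} (hw : IsPSH Ω w) {z' : Fin n → ℂ} (hz' : z' ∈ Ω)
    (d : Fin n → ℂ) (hmem : ∀ ζ : ℂ, ‖ζ‖ ≤ 1 → z' + ζ • d ∈ Ω)
    {δ : ℝ} (hδ : 0 < δ)
    (harc : ∀ ζ : ℂ, ‖ζ‖ = 1 → ‖ζ - 1‖ < δ → w (z' + ζ • d) = ⊥) :
    w z' = ⊥ := by
  obtain ⟨husc, hnt, -, hmp⟩ := hw
  obtain ⟨M, hM⟩ := usc_circle_bound hΩo husc hnt z' d (fun ζ hζ => hmem ζ hζ.le)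
  -- main step: w z' is below M + 1 - B for every B ≥ 1
  have main : ∀ B : ℝ, 1 ≤ B → w z' ≤ ((M + 1 - B : ℝ) : EReal) := by
    intro B hB
    have hBpos : (0:ℝ) < B := lt_of_lt_of_le one_pos hB
    set η : ℝ := min (δ/2) (min (δ^2/(16*B)) (1/2)) with hηdef
    have hηpos : 0 < η := by
      refine lt_min (by linarith) (lt_min ?_ (by norm_num))
      positivity
    have hηhalf : η ≤ 1/2 := le_trans (min_le_right _ _) (min_le_right _ _)
    have hηδ : η ≤ δ/2 := min_le_left _ _
    have hηB : η ≤ δ^2/(16*B) := le_trans (min_le_right _ _) (min_le_left _ _)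
    set r : ℝ := 1 - η with hrdef
    have hr0 : 0 < r := by simp only [hrdef]; linarith
    have hr1 : r < 1 := by simp only [hrdef]; linarith
    set K : ℝ := δ^2/(16*η) with hKdef
    have hKpos : 0 < K := by positivity
    have hKB : B ≤ K := by
      have hηB' : η * (16*B) ≤ δ^2 := (le_div_iff₀ (by positivity)).1 hηB
      rw [hKdef, le_div_iff₀ (by positivity)]
      nlinarith [hηB']
    -- choose N
    obtain ⟨m0, hm0⟩ := exists_pow_lt_of_lt_one (show (0:ℝ) < δ/(8*K) by positivity) hr1
    set N : ℕ := m0 + 1 with hNdef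
    have hN0 : 0 < N := Nat.succ_pos _
    have hrN : r ^ N < δ/(8*K) := by
      calc r ^ N ≤ r ^ m0 := pow_le_pow_of_le_one hr0.le hr1.le (by omega)
      _ < _ := hm0
    -- the polynomial
    set p : Polynomial ℂ :=
      Polynomial.C ((M + 1 : ℝ) : ℂ) -
        Polynomial.C ((K : ℝ) : ℂ) *
          (Polynomial.C 2 * (∑ k ∈ Finset.range N, (Polynomial.C ((r : ℝ) : ℂ) * Polynomial.X) ^ k)
            - Polynomial.C 1) with hpdef
    have hpev : ∀ ζ : ℂ, p.eval ζ =
        ((M + 1 : ℝ) : ℂ) - (K : ℂ) * (2 * (∑ k ∈ Finset.range N, ((r : ℂ) * ζ) ^ k) - 1) := by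
      intro ζ
      simp [hpdef, Polynomial.eval_finset_sum]
    have hpre : ∀ ζ : ℂ, (p.eval ζ).re =
        (M + 1) - K * ((2 * (∑ k ∈ Finset.range N, ((r : ℂ) * ζ) ^ k) - 1).re) := by
      intro ζ
      rw [hpev]
      simp [Complex.sub_re, Complex.add_re]
    -- off-arc bound
    have hoff : ∀ ζ : ℂ, ‖ζ‖ = 1 → δ ≤ ‖ζ - 1‖ → (M:ℝ) ≤ (p.eval ζ).re := by
      intro ζ hζn hζoff
      set wc : ℂ := (r : ℂ) * ζ with hwcdef
      have hwcn : ‖wc‖ = r := by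
        simp [hwcdef, hζn, abs_of_pos hr0]
      have hwc1 : wc ≠ 1 := by
        intro h; rw [h] at hwcn; simp at hwcn; linarith
      have h1wc : (1:ℂ) - wc ≠ 0 := by
        intro h; apply hwc1; linear_combination -h
      -- lower bound on ‖1 - wc‖
      have hd1 : δ/2 ≤ ‖(1:ℂ) - wc‖ := by
        have h1 : ‖ζ - wc‖ = η := by
          have e : ζ - wc = ((η : ℝ) : ℂ) * ζ := by
            rw [hwcdef, hrdef]; push_cast; ring
          rw [e, norm_mul, Complex.norm_real, Real.norm_eq_abs, abs_of_pos hηpos, hζn, mul_one]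
        have h2 : ‖ζ - 1‖ ≤ ‖ζ - wc‖ + ‖wc - 1‖ := norm_sub_le_norm_sub_add_norm_sub ζ wc 1
        rw [norm_sub_rev]
        linarith
      have hnsq : (δ/2)^2 ≤ Complex.normSq (1 - wc) := by
        rw [Complex.normSq_eq_norm_sq]
        exact pow_le_pow_left₀ (by positivity) hd1 2
      -- geometric sum
      have hS : (∑ k ∈ Finset.range N, wc ^ k) = (1 - wc^N)/(1 - wc) := by
        rw [geom_sum_eq hwc1, ← neg_sub (wc^N) 1, ← neg_sub wc 1, neg_div_neg_eq]
      have h2S : 2 * (∑ k ∈ Finset.range N, wc ^ k) - 1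
          = (1 + wc)/(1 - wc) - 2 * wc^N/(1 - wc) := by
        rw [hS]
        field_simp
        ring
      -- real part bound
      have hre1 : ((1 + wc)/(1 - wc)).re ≤ (1 - r^2)/((δ/2)^2) := by
        rw [re_one_add_div_one_sub]
        have hnum : 1 - Complex.normSq wc = 1 - r^2 := by
          rw [Complex.normSq_eq_norm_sq, hwcn]
        rw [hnum]
        have hnum0 : (0:ℝ) ≤ 1 - r^2 := by nlinarith [hr1, hr0]
        exact div_le_div_of_nonneg_left hnum0 (by positivity) hnsq
      have hre2 : -((2 * wc^N/(1 - wc)).re) ≤ 2 * r^N/(δ/2) := by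
        have habs : ‖2 * wc^N/(1 - wc)‖ ≤ 2 * r^N/(δ/2) := by
          rw [norm_div, norm_mul, norm_pow]
          rw [hwcn]
          simp only [norm_ofNat]
          gcongr
        have h1 := Complex.abs_re_le_norm (2 * wc^N/(1 - wc))
        have h2 := neg_le_abs ((2 * wc^N/(1 - wc)).re)
        have h3 := neg_abs_le ((2 * wc^N/(1 - wc)).re)
        have h4 : |(2 * wc^N/(1 - wc)).re| ≤ 2 * r^N/(δ/2) := le_trans h1 habs
        have h5 := abs_le.1 h4
        linarith [h5.1, h5.2]
      have hrebound : (2 * (∑ k ∈ Finset.range N, wc ^ k) - 1).re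
          ≤ (1 - r^2)/((δ/2)^2) + 2 * r^N/(δ/2) := by
        rw [h2S, Complex.sub_re]
        linarith
      -- multiply by K
      have hK1 : K * ((1 - r^2)/((δ/2)^2)) ≤ 1/2 := by
        have h1 : 1 - r^2 ≤ 2*η := by
          rw [hrdef]; nlinarith [sq_nonneg η]
        have h2 : K * ((1 - r^2)/((δ/2)^2)) ≤ K * ((2*η)/((δ/2)^2)) := by
          gcongr
        have h3 : K * ((2*η)/((δ/2)^2)) = 1/2 := by
          rw [hKdef]; field_simp; ring
        linarith
      have hK2 : K * (2 * r^N/(δ/2)) ≤ 1/2 := by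
        have h1 : r^N ≤ δ/(8*K) := hrN.le
        have h2 : K * (2 * r^N/(δ/2)) ≤ K * (2 * (δ/(8*K))/(δ/2)) := by
          gcongr
        have h3 : K * (2 * (δ/(8*K))/(δ/2)) = 1/2 := by
          field_simp
          ring
        linarith
      have : K * ((2 * (∑ k ∈ Finset.range N, wc ^ k) - 1).re) ≤ 1 := by
        calc K * ((2 * (∑ k ∈ Finset.range N, wc ^ k) - 1).re)
            ≤ K * ((1 - r^2)/((δ/2)^2) + 2 * r^N/(δ/2)) :=
              mul_le_mul_of_nonneg_left hrebound hKpos.le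
          _ = K * ((1 - r^2)/((δ/2)^2)) + K * (2 * r^N/(δ/2)) := by ring
          _ ≤ 1/2 + 1/2 := add_le_add hK1 hK2
          _ = 1 := by norm_num
      rw [hpre]
      simp only [hwcdef] at this
      linarith
    -- circle hypothesis for the maximum principle
    have hcirc : ∀ ζ : ℂ, ‖ζ‖ = 1 → w (z' + ζ • d) ≤ (((p.eval ζ).re : ℝ) : EReal) := by
      intro ζ hζn
      by_cases hca : ‖ζ - 1‖ < δ
      · rw [harc ζ hζn hca]; exact bot_le
      · push_neg at hca
        exact (hM ζ hζn).trans (by exact_mod_cast hoff ζ hζn hca)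
    have happ := hmp z' hz' d 1 one_pos (by simpa using hmem) p (by simpa using hcirc) 0 (by simp)
    rw [show z' + (0:ℂ) • d = z' by simp] at happ
    have hp0 : (p.eval 0).re = M + 1 - K := by
      rw [hpre]
      have hsum : (∑ k ∈ Finset.range N, ((r : ℂ) * 0) ^ k) = 1 := by
        rw [mul_zero]
        rw [geom_sum_eq ?_ N]
        · rw [zero_pow hN0.ne']; simp
        · norm_num
      rw [hsum]
      norm_num
    calc w z' ≤ (((p.eval 0).re : ℝ) : EReal) := happ
      _ = ((M + 1 - K : ℝ) : EReal) := by rw [hp0]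
      _ ≤ ((M + 1 - B : ℝ) : EReal) := by exact_mod_cast (by linarith : M + 1 - K ≤ M + 1 - B)
  -- conclude
  by_contra hbot
  have hnetop : w z' ≠ ⊤ := hnt z' hz'
  set x₀ : ℝ := (w z').toReal with hx₀
  have hx₀eq : ((x₀ : ℝ) : EReal) = w z' := EReal.coe_toReal hnetop hbot
  have hfin := main (max 1 (M + 2 - x₀)) (le_max_left _ _)
  rw [← hx₀eq] at hfin
  have : x₀ ≤ M + 1 - max 1 (M + 2 - x₀) := by exact_mod_cast hfin
  have := le_max_right 1 (M + 2 - x₀)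
  linarith


lemma exists_ne_bot_near {n : ℕ} {Ω : Set (Fin n → ℂ)} (hΩo : IsOpen Ω)
    (hΩc : IsConnected Ω) {w : (Fin n → ℂ) → EReal} (hw : IsPSH Ω w)
    {z : Fin n → ℂ} (hz : z ∈ Ω) {U : Set (Fin n → ℂ)} (hU : U ∈ 𝓝 z) :
    ∃ ζ ∈ U ∩ Ω, w ζ ≠ ⊥ := by
  by_contra hcon
  push_neg at hcon
  -- the set of points around which w is identically ⊥
  set A : Set (Fin n → ℂ) :=
    {x | ∃ ρ : ℝ, 0 < ρ ∧ Metric.ball x ρ ⊆ Ω ∧ ∀ y ∈ Metric.ball x ρ, w y = ⊥} with hAdef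
  have hAopen : IsOpen A := by
    rw [Metric.isOpen_iff]
    rintro x ⟨ρ, hρ, hsub, hbot⟩
    refine ⟨ρ, hρ, ?_⟩
    intro x₂ hx₂
    refine ⟨ρ - dist x₂ x, by simp [Metric.mem_ball] at hx₂; linarith, ?_, ?_⟩
    · exact fun y hy => hsub (Metric.mem_ball.2 (by
        have := Metric.mem_ball.1 hy
        have h2 := Metric.mem_ball.1 hx₂
        calc dist y x ≤ dist y x₂ + dist x₂ x := dist_triangle _ _ _
          _ < ρ := by linarith))
    · intro y hy
      refine hbot y (Metric.mem_ball.2 ?_)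
      have := Metric.mem_ball.1 hy
      have h2 := Metric.mem_ball.1 hx₂
      calc dist y x ≤ dist y x₂ + dist x₂ x := dist_triangle _ _ _
        _ < ρ := by linarith
  have hAsub : A ⊆ Ω := by
    rintro x ⟨ρ, hρ, hsub, -⟩
    exact hsub (Metric.mem_ball_self hρ)
  -- relative closedness
  have hkey : Ω ∩ closure A ⊆ A := by
    rintro x ⟨hxΩ, hxcl⟩
    obtain ⟨ε, hε, hball⟩ := Metric.isOpen_iff.1 hΩo x hxΩ
    set r : ℝ := ε / 4 with hrdef
    have hr : 0 < r := by positivity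
    have hball4 : Metric.ball x (4 * r) ⊆ Ω := by
      rw [show 4 * r = ε by rw [hrdef]; ring]; exact hball
    obtain ⟨z₁, hz₁A, hz₁d⟩ := Metric.mem_closure_iff.1 hxcl r hr
    obtain ⟨ρ₁, hρ₁, hsub₁, hbot₁⟩ := hz₁A
    set ρ : ℝ := min ρ₁ r with hρdef
    have hρpos : 0 < ρ := lt_min hρ₁ hr
    have hbotρ : ∀ y ∈ Metric.ball z₁ ρ, w y = ⊥ := fun y hy =>
      hbot₁ y (Metric.ball_subset_ball (min_le_left _ _) hy)
    have hclaim : ∀ z₂ ∈ Metric.ball x r, w z₂ = ⊥ := by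
      intro z₂ hz₂
      have hz₂Ω : z₂ ∈ Ω := hball4 (Metric.ball_subset_ball (by linarith) hz₂)
      by_cases hz21 : z₂ = z₁
      · exact hz21 ▸ hbotρ z₁ (Metric.mem_ball_self hρpos)
      · set d : Fin n → ℂ := z₁ - z₂ with hddef
        have hdn : ‖d‖ < 2 * r := by
          rw [hddef, ← dist_eq_norm]
          calc dist z₁ z₂ ≤ dist z₁ x + dist x z₂ := dist_triangle _ _ _
            _ < 2 * r := by
                have h1 := Metric.mem_ball.1 hz₂
                have h2 : dist z₁ x < r := by rw [dist_comm]; exact hz₁d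
                have h3 : dist x z₂ = dist z₂ x := dist_comm _ _
                linarith
        have hmem : ∀ ζ : ℂ, ‖ζ‖ ≤ 1 → z₂ + ζ • d ∈ Ω := by
          intro ζ hζ
          apply hball4
          rw [Metric.mem_ball]
          calc dist (z₂ + ζ • d) x ≤ dist (z₂ + ζ • d) z₂ + dist z₂ x := dist_triangle _ _ _
            _ < 4 * r := by
                rw [dist_eq_norm, add_sub_cancel_left, norm_smul]
                have h1 : ‖ζ‖ * ‖d‖ ≤ 1 * (2*r) := by
                  apply mul_le_mul hζ hdn.le (norm_nonneg _) zero_le_one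
                have h2 := Metric.mem_ball.1 hz₂
                linarith
        have hδpos : 0 < ρ / (2 * r) := by positivity
        have harc : ∀ ζ : ℂ, ‖ζ‖ = 1 → ‖ζ - 1‖ < ρ / (2*r) → w (z₂ + ζ • d) = ⊥ := by
          intro ζ hζn hζarc
          apply hbotρ
          rw [Metric.mem_ball, dist_eq_norm]
          have he : z₂ + ζ • d - z₁ = (ζ - 1) • d := by
            rw [hddef, sub_smul, one_smul]
            abel
          rw [he, norm_smul]
          have hd0 : (0:ℝ) < ‖d‖ := by
            rw [norm_pos_iff]
            rw [hddef, sub_ne_zero]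
            exact fun h => hz21 h.symm
          calc ‖ζ - 1‖ * ‖d‖ < (ρ / (2*r)) * (2*r) := by
                apply mul_lt_mul' hζarc.le hdn (norm_nonneg _) hδpos
            _ = ρ := by field_simp
        exact bot_propagation hΩo hw hz₂Ω d hmem hδpos harc
    exact ⟨r, hr, fun y hy => hball4 (Metric.ball_subset_ball (by linarith) hy), hclaim⟩
  -- A is nonempty
  have hzA : z ∈ A := by
    have hUΩ : U ∩ Ω ∈ 𝓝 z := inter_mem hU (hΩo.mem_nhds hz)
    obtain ⟨ρ, hρ, hsub⟩ := Metric.mem_nhds_iff.1 hUΩ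
    exact ⟨ρ, hρ, fun y hy => (hsub hy).2, fun y hy => hcon y (hsub hy)⟩
  -- connectivity
  have hΩA : Ω ⊆ A := by
    apply hΩc.isPreconnected.subset_left_of_subset_union hAopen
      (isOpen_compl_iff.2 isClosed_closure) (disjoint_compl_right.mono_left subset_closure) ?_ ⟨z, hz, hzA⟩
    intro x hx
    by_cases hxc : x ∈ closure A
    · exact Or.inl (hkey ⟨hx, hxc⟩)
    · exact Or.inr hxc
  obtain ⟨z₀, hz₀Ω, hz₀⟩ := hw.2.2.1
  obtain ⟨ρ₀, hρ₀, -, hbot₀⟩ := hΩA hz₀Ω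
  exact hz₀ (hbot₀ z₀ (Metric.mem_ball_self hρ₀))


lemma ereal_toReal_nonneg {a : EReal} (h : 0 ≤ a) : 0 ≤ a.toReal := by
  induction a with
  | bot => simp at h
  | coe x => exact_mod_cast h
  | top => simp

/-- The key pointwise majorization. -/
lemma erealRpow_sub_le {α ε lam : ℝ} (hε : 0 < ε) (hlam : 0 ≤ lam)
    (hlin : ∀ x : ℝ, 0 ≤ x → x ^ α ≤ ε * x + lam)
    {a b : EReal} (ha : 0 ≤ a) (hab : a ≤ b) :
    max (erealRpow a α - (lam : EReal)) 0 ≤ (ε : EReal) * b := by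
  by_cases hatop : a = ⊤
  · have hb : b = ⊤ := top_le_iff.1 (hatop ▸ hab)
    rw [hatop, hb, erealRpow, if_pos rfl, EReal.top_sub_coe, EReal.coe_mul_top_of_pos hε]
    exact le_top
  · have hanb : a ≠ ⊥ := by
      intro h; rw [h] at ha; exact absurd ha (by simp)
    set x : ℝ := a.toReal with hxdef
    have hax : ((x : ℝ) : EReal) = a := EReal.coe_toReal hatop hanb
    have hx0 : 0 ≤ x := ereal_toReal_nonneg ha
    have hrpow : erealRpow a α = ((x ^ α : ℝ) : EReal) := by
      rw [erealRpow, if_neg hatop]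
    by_cases hbtop : b = ⊤
    · rw [hbtop, EReal.coe_mul_top_of_pos hε]; exact le_top
    · have hbnb : b ≠ ⊥ := by
        intro h; rw [h] at hab; exact hanb (le_bot_iff.1 hab)
      set y : ℝ := b.toReal with hydef
      have hby : ((y : ℝ) : EReal) = b := EReal.coe_toReal hbtop hbnb
      have hxy : x ≤ y := by
        rw [← EReal.coe_le_coe_iff]; rw [hax, hby]; exact hab
      rw [hrpow, ← hby, ← EReal.coe_mul, ← EReal.coe_sub]
      apply max_le
      · rw [EReal.coe_le_coe_iff]
        have := hlin x hx0
        nlinarith [hε]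
      · rw [show (0:EReal) = ((0:ℝ):EReal) by norm_num, EReal.coe_le_coe_iff]
        exact mul_nonneg hε.le (hx0.trans hxy)


/-- Corollary 3.3, first part: let `Ω ⊆ ℂⁿ` be a bounded domain, let
`u ∈ ℳ` and let `0 < α < 1`. Then `u^α` is tame. -/
theorem statement8 {n : ℕ} (Ω : Set (Fin n → ℂ))
    (hΩo : IsOpen Ω) (hΩc : IsConnected Ω) (hΩb : Bornology.IsBounded Ω)
    (u : (Fin n → ℂ) → EReal) (hu : MemM Ω u) (α : ℝ) (hα0 : 0 < α) (hα1 : α < 1) :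
    Tame Ω (fun z => erealRpow (u z) α) := by
  obtain ⟨hupos, v, hv, huv⟩ := hu
  set f : (Fin n → ℂ) → EReal := fun z => erealRpow (u z) α with hfdef
  have hv0 : ∀ ζ ∈ Ω, 0 ≤ v ζ := fun ζ h => le_trans (hupos ζ h) (huv ζ h)
  -- nonnegativity facts
  have hRopnn : ∀ (lam : ℝ), ∀ ζ ∈ Ω, 0 ≤ Rop Ω f lam ζ := by
    intro lam ζ hζ
    apply le_sInf
    rintro y ⟨v', hv', hmaj, rfl⟩
    exact le_trans (le_max_right _ _) (hmaj ζ hζ)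
  have hSlamnn : ∀ (lam : ℝ), ∀ ζ ∈ Ω, 0 ≤ Slam Ω f lam ζ := by
    intro lam ζ hζ
    apply le_liminf_of_le (by isBoundedDefault)
    filter_upwards [self_mem_nhdsWithin] with x hx
    exact hRopnn lam x hx
  set g : (Fin n → ℂ) → EReal := fun ζ => ⨅ (lam : ℝ) (_ : 0 ≤ lam), Slam Ω f lam ζ with hgdef
  have hgnn : ∀ ζ ∈ Ω, 0 ≤ g ζ := by
    intro ζ hζ
    exact le_iInf fun lam => le_iInf fun hlam => hSlamnn lam ζ hζ
  -- the key upper bound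
  have hkey : ∀ ζ ∈ Ω, v ζ ≠ ⊤ → g ζ ≤ 0 := by
    intro ζ hζ hvt
    have hvnb : v ζ ≠ ⊥ := by
      intro h
      have := hv0 ζ hζ
      rw [h] at this
      exact absurd this (by simp)
    set y : ℝ := (v ζ).toReal with hydef
    have hyv : ((y : ℝ) : EReal) = v ζ := EReal.coe_toReal hvt hvnb
    have hy0 : 0 ≤ y := ereal_toReal_nonneg (hv0 ζ hζ)
    by_contra hgt
    push_neg at hgt
    obtain ⟨c, hc0, hcg⟩ := EReal.exists_between_coe_real hgt
    have hc0' : (0:ℝ) < c := by exact_mod_cast hc0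
    -- choose ε, lam
    set ε : ℝ := c / (y + 1) with hεdef
    have hε : 0 < ε := by positivity
    obtain ⟨lam, hlam0, hlin⟩ := rpow_le_linear hα0 hα1 hε
    have hmaj : ∀ x ∈ Ω, max (f x - (lam : EReal)) 0 ≤ (ε : EReal) * v x := by
      intro x hx
      exact erealRpow_sub_le hε hlam0 hlin (hupos x hx) (huv x hx)
    have hRle : Rop Ω f lam ζ ≤ (ε : EReal) * v ζ := by
      apply sInf_le
      exact ⟨fun x => (ε : EReal) * v x, hv.const_smul hε, hmaj, rfl⟩
    have hSle : Slam Ω f lam ζ ≤ Rop Ω f lam ζ := by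
      refine liminf_le_of_frequently_le ?_ (by isBoundedDefault)
      exact (Filter.Eventually.frequently
        (eventually_pure (a := ζ) (p := fun x => Rop Ω f lam x ≤ Rop Ω f lam ζ) |>.2
          le_rfl)).filter_mono (pure_le_nhdsWithin hζ)
    have hεy : (ε : EReal) * v ζ ≤ (c : EReal) := by
      rw [← hyv, ← EReal.coe_mul, EReal.coe_le_coe_iff, hεdef]
      rw [div_mul_eq_mul_div, mul_comm]
      rw [div_le_iff₀ (by positivity)]
      nlinarith
    have : g ζ ≤ (c : EReal) :=
      le_trans (iInf₂_le lam hlam0) (le_trans hSle (le_trans hRle hεy))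
    exact absurd (lt_of_lt_of_le hcg this) (lt_irrefl _)
  -- conclude
  intro z hz
  refine le_antisymm ?_ ?_
  · -- Sop ≤ 0 via frequently
    refine liminf_le_of_frequently_le ?_ (by isBoundedDefault)
    rw [frequently_iff]
    intro Uf hUf
    obtain ⟨O, hOopen, hzO, hsub⟩ := mem_nhdsWithin.1 hUf
    obtain ⟨ζ, hζmem, hζnb⟩ := exists_ne_bot_near hΩo hΩc hv hz (hOopen.mem_nhds hzO)
    have hvt : v ζ ≠ ⊤ := by
      intro h
      apply hζnb
      show -(v ζ) = ⊥
      rw [h]; rfl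
    exact ⟨ζ, hsub ⟨hζmem.1, hζmem.2⟩, hkey ζ hζmem.2 hvt⟩
  · apply le_liminf_of_le (by isBoundedDefault)
    filter_upwards [self_mem_nhdsWithin] with x hx
    exact hgnn x hx
end
end

section
/- Let Ω ⊆ ℂⁿ be a bounded domain, let u ∈ ℳ and let 0 < α < 1. Then the functions log⁺ u = max{log u, 0} and u^α · log⁺ u are tame. -/
open Complex Polynomial Filter Set Topology

noncomputable section

/-- `log⁺ x = max {log x, 0}` for `x ∈ [0, +∞] ⊆ EReal`. -/
def erealLogPlus (x : EReal) : EReal :=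
  if x = ⊤ then ⊤ else ((max (Real.log x.toReal) 0 : ℝ) : EReal)

lemma logplus_lin {ε : ℝ} (hε : 0 < ε) :
    ∃ lam : ℝ, 0 ≤ lam ∧ ∀ r : ℝ, 0 ≤ r → max (max (Real.log r) 0 - lam) 0 ≤ ε * r := by
  refine ⟨max (-1 - Real.log ε) 0, le_max_right _ _, fun r hr => ?_⟩
  have hεr : (0:ℝ) ≤ ε * r := by positivity
  refine max_le ?_ hεr
  rcases eq_or_lt_of_le hr with h | h
  · have := le_max_right (-1 - Real.log ε) 0
    simp only [← h, Real.log_zero, max_self]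
    linarith
  · have hlog : Real.log r ≤ ε * r - 1 - Real.log ε := by
      have := Real.log_le_sub_one_of_pos (mul_pos hε h)
      rw [Real.log_mul (ne_of_gt hε) (ne_of_gt h)] at this
      linarith
    rcases le_total (Real.log r) 0 with h2 | h2
    · rw [max_eq_right h2]
      have := le_max_right (-1 - Real.log ε) 0
      linarith
    · rw [max_eq_left h2]
      have := le_max_left (-1 - Real.log ε) 0
      linarith

lemma rpow_logplus_lin {α : ℝ} (hα0 : 0 < α) (hα1 : α < 1) {ε : ℝ} (hε : 0 < ε) :
    ∃ lam : ℝ, 0 ≤ lam ∧ ∀ r : ℝ, 0 ≤ r →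
      max (r ^ α * max (Real.log r) 0 - lam) 0 ≤ ε * r := by
  set β := (1 - α) / 2 with hβ
  have hβ0 : 0 < β := by rw [hβ]; linarith
  set γ := (1 + α) / 2 with hγ
  have hγ0 : 0 < γ := by rw [hγ]; linarith
  have hγ1 : γ < 1 := by rw [hγ]; linarith
  have hαβγ : α + β = γ := by rw [hβ, hγ]; ring
  set R := (1 / (ε * β)) ^ (1 / (1 - γ)) with hR
  have hR0 : 0 ≤ R := by rw [hR]; positivity
  refine ⟨max (R ^ γ / β) 0, le_max_right _ _, fun r hr => ?_⟩
  have hεr : (0:ℝ) ≤ ε * r := by positivity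
  refine max_le ?_ hεr
  rcases le_total r 1 with h1 | h1
  · have hl : Real.log r ≤ 0 := Real.log_nonpos hr h1
    rw [max_eq_right hl]
    have := le_max_right (R ^ γ / β) 0
    simp only [mul_zero]
    linarith
  have hrpos : (0:ℝ) < r := lt_of_lt_of_le one_pos h1
  have hkey : r ^ α * max (Real.log r) 0 ≤ r ^ γ / β := by
    have hlog : Real.log r ≤ r ^ β / β := Real.log_le_rpow_div hr hβ0
    rw [max_eq_left (Real.log_nonneg h1)]
    calc r ^ α * Real.log r ≤ r ^ α * (r ^ β / β) :=
          mul_le_mul_of_nonneg_left hlog (Real.rpow_nonneg hr α)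
      _ = r ^ γ / β := by
          rw [mul_div_assoc', ← Real.rpow_add hrpos, hαβγ]
  rcases le_total r R with h2 | h2
  · have : r ^ γ ≤ R ^ γ := Real.rpow_le_rpow hr h2 hγ0.le
    have h3 : r ^ α * max (Real.log r) 0 ≤ R ^ γ / β := by
      refine hkey.trans ?_
      gcongr
    have := le_max_left (R ^ γ / β) 0
    linarith
  · -- R ≤ r : show r ^ γ / β ≤ ε * r
    have hRγ : R ^ (1 - γ) = 1 / (ε * β) := by
      rw [hR, ← Real.rpow_mul (by positivity), one_div (1-γ), inv_mul_cancel₀ (by linarith), Real.rpow_one]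
    have h4 : 1 / (ε * β) ≤ r ^ (1 - γ) := by
      rw [← hRγ]
      exact Real.rpow_le_rpow hR0 h2 (by linarith)
    have h5 : r ^ γ * (1 / (ε * β)) ≤ r := by
      calc r ^ γ * (1 / (ε * β)) ≤ r ^ γ * r ^ (1 - γ) :=
            mul_le_mul_of_nonneg_left h4 (Real.rpow_nonneg hr γ)
        _ = r := by rw [← Real.rpow_add hrpos]; norm_num
    have h6 : r ^ γ / β ≤ ε * r := by
      rw [div_le_iff₀ hβ0] at *
      have hh : r ^ γ * (1 / (ε * β)) * (ε * β) ≤ r * (ε * β) := by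
        apply mul_le_mul_of_nonneg_right h5 (by positivity)
      rw [mul_assoc, one_div, inv_mul_cancel₀ (by positivity), mul_one] at hh
      calc r ^ γ ≤ r * (ε * β) := hh
        _ = ε * r * β := by ring
    have := le_max_right (R ^ γ / β) 0
    have := le_max_left (R ^ γ / β) 0
    linarith [hkey]

lemma ereal_cmul_lt_top {ε : ℝ} (hε : 0 < ε) {x : EReal} (hx : x ≠ ⊤) : (ε : EReal) * x < ⊤ := by
  induction x using EReal.rec with
  | bot => rw [EReal.coe_mul_bot_of_pos hε]; exact bot_lt_top
  | coe a => rw [← EReal.coe_mul]; exact EReal.coe_lt_top _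
  | top => exact absurd rfl hx

lemma ereal_cmul_ne_bot {ε : ℝ} (hε : 0 < ε) {x : EReal} (hx : x ≠ ⊥) : (ε : EReal) * x ≠ ⊥ := by
  induction x using EReal.rec with
  | bot => exact absurd rfl hx
  | coe a => rw [← EReal.coe_mul]; exact EReal.coe_ne_bot _
  | top => rw [EReal.coe_mul_top_of_pos hε]; exact top_ne_bot

lemma ereal_cmul_le_coe_iff {ε : ℝ} (hε : 0 < ε) {x : EReal} {a : ℝ} :
    (ε : EReal) * x ≤ (a : EReal) ↔ x ≤ ((a / ε : ℝ) : EReal) := by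
  induction x using EReal.rec with
  | bot => simp [EReal.coe_mul_bot_of_pos hε]
  | coe b =>
      rw [← EReal.coe_mul, EReal.coe_le_coe_iff, EReal.coe_le_coe_iff, le_div_iff₀ hε,
        mul_comm]
  | top =>
      rw [EReal.coe_mul_top_of_pos hε]
      simp [top_le_iff, EReal.top_ne_coe]

lemma ereal_cmul_mono {ε : ℝ} (hε : 0 ≤ ε) {x y : EReal} (h : x ≤ y) :
    (ε : EReal) * x ≤ (ε : EReal) * y :=
  mul_le_mul_of_nonneg_left h (by exact_mod_cast hε)

lemma IsPSH.const_mul {n : ℕ} {Ω : Set (Fin n → ℂ)} {w : (Fin n → ℂ) → EReal}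
    (h : IsPSH Ω w) {ε : ℝ} (hε : 0 < ε) : IsPSH Ω (fun z => (ε : EReal) * w z) := by
  obtain ⟨husc, hnt, ⟨z0, hz0, hz0'⟩, hmp⟩ := h
  refine ⟨?_, fun z hz => (ereal_cmul_lt_top hε (hnt z hz)).ne,
    ⟨z0, hz0, ereal_cmul_ne_bot hε hz0'⟩, ?_⟩
  · intro z hz y hy
    by_cases hyt : y = ⊤
    · subst hyt
      filter_upwards [eventually_mem_nhdsWithin] with ξ hξ
      exact ereal_cmul_lt_top hε (hnt ξ hξ)
    · obtain ⟨c, hc1, hc2⟩ := EReal.exists_between_coe_real hy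
      have hwz : w z < ((c / ε : ℝ) : EReal) := by
        by_contra hcon
        push_neg at hcon
        have : ((c : ℝ) : EReal) ≤ (ε : EReal) * w z := by
          have h2 : (ε : EReal) * ((c / ε : ℝ) : EReal) ≤ (ε : EReal) * w z :=
            ereal_cmul_mono hε.le hcon
          rwa [← EReal.coe_mul, mul_div_cancel₀ c hε.ne'] at h2
        exact absurd hc1 (not_lt.2 this)
      filter_upwards [husc z hz _ hwz] with ξ hξ
      refine lt_of_le_of_lt ?_ hc2
      exact (ereal_cmul_le_coe_iff hε).2 hξ.le
  · intro z hz dir r hr hdisc p hp ζ hζ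
    have hq : ∀ ξ : ℂ, ((Polynomial.C ((ε⁻¹ : ℝ) : ℂ) * p).eval ξ).re = (p.eval ξ).re / ε := by
      intro ξ
      rw [Polynomial.eval_mul, Polynomial.eval_C, Complex.re_ofReal_mul, div_eq_inv_mul]
    have key := hmp z hz dir r hr hdisc (Polynomial.C ((ε⁻¹ : ℝ) : ℂ) * p) ?_ ζ hζ
    · rw [hq ζ] at key
      exact (ereal_cmul_le_coe_iff hε).2 key
    · intro ξ hξ
      rw [hq ξ]
      exact (ereal_cmul_le_coe_iff hε).1 (hp ξ hξ)

lemma IsPSupH.const_mul {n : ℕ} {Ω : Set (Fin n → ℂ)} {v : (Fin n → ℂ) → EReal}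
    (h : IsPSupH Ω v) {ε : ℝ} (hε : 0 < ε) : IsPSupH Ω (fun z => (ε : EReal) * v z) := by
  have := IsPSH.const_mul h hε
  unfold IsPSupH at *
  convert this using 2 with z
  rw [mul_neg]
lemma sum_center {M : Type*} [AddCommMonoid M] (k : ℕ) (f : ℕ → M) :
    ∑ j ∈ Finset.range (2*k+1), f j
      = f k + ∑ d ∈ Finset.Icc 1 k, (f (k-d) + f (k+d)) := by
  have h1 : ∑ j ∈ Finset.range (2*k+1), f j
      = ∑ j ∈ Finset.Ico 0 k, f j + ∑ j ∈ Finset.Ico k (2*k+1), f j := by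
    rw [Finset.range_eq_Ico, ← Finset.sum_Ico_consecutive f (Nat.zero_le k) (by omega)]
  have h2 : ∑ j ∈ Finset.Ico k (2*k+1), f j
      = f k + ∑ j ∈ Finset.Ico (k+1) (2*k+1), f j := by
    rw [Finset.sum_eq_sum_Ico_succ_bot (by omega) f]
  have h3 : ∑ j ∈ Finset.Ico (k+1) (2*k+1), f j = ∑ d ∈ Finset.Icc 1 k, f (k+d) := by
    apply Finset.sum_nbij' (fun j => j - k) (fun d => k + d)
    · intro a ha; simp only [Finset.mem_Ico] at ha; simp only [Finset.mem_Icc]; omega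
    · intro a ha; simp only [Finset.mem_Icc] at ha; simp only [Finset.mem_Ico]; omega
    · intro a ha; simp only [Finset.mem_Ico] at ha; omega
    · intro a ha; simp only [Finset.mem_Icc] at ha; omega
    · intro a ha; simp only [Finset.mem_Ico] at ha; congr 1; omega
  have h4 : ∑ j ∈ Finset.Ico 0 k, f j = ∑ d ∈ Finset.Icc 1 k, f (k-d) := by
    apply Finset.sum_nbij' (fun j => k - j) (fun d => k - d)
    · intro a ha; simp only [Finset.mem_Ico] at ha; simp only [Finset.mem_Icc]; omega
    · intro a ha; simp only [Finset.mem_Icc] at ha; simp only [Finset.mem_Ico]; omega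
    · intro a ha; simp only [Finset.mem_Ico] at ha; omega
    · intro a ha; simp only [Finset.mem_Icc] at ha; omega
    · intro a ha; simp only [Finset.mem_Ico] at ha; congr 1; omega
  rw [h1, h2, h3, h4, Finset.sum_add_distrib]
  abel

lemma binom_poly (k : ℕ) :
    ∃ P : Polynomial ℂ,
      (∀ Δ : ℝ, ((P.eval (Complex.exp (Δ * Complex.I))).re) = (2 + 2 * Real.cos Δ) ^ k) ∧
      (P.eval 0).re = (Nat.choose (2*k) k : ℝ) := by
  refine ⟨Polynomial.C ((Nat.choose (2*k) k : ℝ) : ℂ)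
      + ∑ d ∈ Finset.Icc 1 k, Polynomial.C ((2 * (Nat.choose (2*k) (k+d)) : ℝ) : ℂ) * X^d,
      ?_, ?_⟩
  swap
  · simp only [Polynomial.eval_add, Polynomial.eval_C, Polynomial.eval_finset_sum,
      Polynomial.eval_mul, Polynomial.eval_pow, Polynomial.eval_X]
    rw [Finset.sum_eq_zero, add_zero, Complex.ofReal_re]
    intro d hd
    have : d ≠ 0 := by simp only [Finset.mem_Icc] at hd; omega
    simp [zero_pow this]
  intro Δ
  set A := Complex.exp (Δ * Complex.I) with hA
  set B := Complex.exp ((-Δ : ℝ) * Complex.I) with hB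
  have hAB : A * B = 1 := by
    rw [hA, hB, ← Complex.exp_add]
    push_cast
    ring_nf
    exact Complex.exp_zero
  -- step 1 : base identity
  have hbase : ((2 + 2 * Real.cos Δ : ℝ) : ℂ) = (1 + A)^2 * B := by
    have hcos : (Real.cos Δ : ℂ) = Complex.cos (Δ : ℂ) := by
      rw [Complex.ofReal_cos]
    have h2cos : 2 * Complex.cos (Δ : ℂ) = A + B := by
      rw [Complex.two_cos, hA, hB]
      push_cast
      ring_nf
    push_cast [hcos]
    have : (1 + A)^2 * B = B + 2 * (A * B) + A * (A * B) := by ring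
    rw [this, hAB]
    linear_combination h2cos
  -- step 2 : power
  have hpow : ((2 + 2 * Real.cos Δ : ℝ) : ℂ) ^ k = (1 + A)^(2*k) * B^k := by
    rw [hbase, mul_pow, ← pow_mul]
  -- step 3 : expand binomial
  have hexp : (1 + A)^(2*k) = ∑ j ∈ Finset.range (2*k+1), A^j * (Nat.choose (2*k) j : ℂ) := by
    rw [add_comm, add_pow]
    congr 1
    funext j
    rw [one_pow, mul_one]
  -- step 4 : real part computation
  have hAj : ∀ (j : ℕ), A^j * B^k = Complex.exp ((((j:ℝ) - k) * Δ : ℝ) * Complex.I) := by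
    intro j
    rw [hA, hB, ← Complex.exp_nat_mul, ← Complex.exp_nat_mul, ← Complex.exp_add]
    congr 1
    push_cast
    ring
  have hre : (((2 + 2 * Real.cos Δ : ℝ) : ℂ) ^ k).re
      = ∑ j ∈ Finset.range (2*k+1), (Nat.choose (2*k) j : ℝ) * Real.cos (((j:ℝ) - k) * Δ) := by
    rw [hpow, hexp, Finset.sum_mul, Complex.re_sum]
    congr 1
    funext j
    rw [show A^j * ((Nat.choose (2*k) j : ℕ) : ℂ) * B^k
        = (((Nat.choose (2*k) j : ℕ) : ℝ) : ℂ) * (A^j * B^k) by push_cast; ring,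
      hAj j, Complex.re_ofReal_mul, Complex.exp_ofReal_mul_I_re]
  -- step 5 : pairing
  rw [show (Polynomial.C ((Nat.choose (2*k) k : ℝ) : ℂ)
      + ∑ d ∈ Finset.Icc 1 k, Polynomial.C ((2 * (Nat.choose (2*k) (k+d)) : ℝ) : ℂ) * X^d).eval A
      = ((Nat.choose (2*k) k : ℝ) : ℂ)
        + ∑ d ∈ Finset.Icc 1 k, ((2 * (Nat.choose (2*k) (k+d)) : ℝ) : ℂ) * A^d by
    simp [Polynomial.eval_finset_sum]]
  have hAd : ∀ d : ℕ, (((2 * (Nat.choose (2*k) (k+d)) : ℝ) : ℂ) * A^d).re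
      = 2 * (Nat.choose (2*k) (k+d) : ℝ) * Real.cos ((d : ℝ) * Δ) := by
    intro d
    have : A ^ d = Complex.exp ((((d:ℝ) * Δ : ℝ)) * Complex.I) := by
      rw [hA, ← Complex.exp_nat_mul]
      congr 1
      push_cast
      ring
    rw [this, Complex.re_ofReal_mul, Complex.exp_ofReal_mul_I_re]
  have : ((2 + 2 * Real.cos Δ : ℝ)) ^ k = (((2 + 2 * Real.cos Δ : ℝ) : ℂ) ^ k).re := by
    rw [← Complex.ofReal_pow, Complex.ofReal_re]
  rw [Complex.add_re, Complex.re_sum, Complex.ofReal_re, this, hre, sum_center k]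
  congr 1
  · rw [show ((k:ℝ) - (k:ℝ)) * Δ = 0 by ring, Real.cos_zero, mul_one]
  · apply Finset.sum_congr rfl
    intro d hd
    simp only [Finset.mem_Icc] at hd
    rw [hAd d]
    have hsub : ((k - d : ℕ) : ℝ) = (k : ℝ) - (d : ℝ) := by
      rw [Nat.cast_sub hd.2]
    have hchoose : (Nat.choose (2*k) (k-d) : ℝ) = (Nat.choose (2*k) (k+d) : ℝ) := by
      have h1 : k + d ≤ 2 * k := by omega
      have := Nat.choose_symm h1
      rw [show 2*k - (k+d) = k - d by omega] at this
      exact_mod_cast congrArg (Nat.cast (R := ℝ)) this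
    rw [hsub, hchoose]
    push_cast
    rw [show ((k:ℝ) - (d:ℝ) - k) * Δ = -((d:ℝ) * Δ) by ring,
      show ((k:ℝ) + (d:ℝ) - k) * Δ = (d:ℝ) * Δ by ring, Real.cos_neg]
    ring

lemma binom_growth {b : ℝ} (hb0 : 0 ≤ b) (hb1 : b < 1) (K : ℝ) :
    ∃ k : ℕ, 0 < k ∧ (4*b)^k + K ≤ (Nat.choose (2*k) k : ℝ) := by
  have hsum : Summable (fun n : ℕ => (n:ℝ)^1 * b^n) :=
    summable_pow_mul_geometric_of_norm_lt_one 1 (by rwa [Real.norm_eq_abs, _root_.abs_of_nonneg hb0])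
  have ht : Tendsto (fun n : ℕ => (n:ℝ)^1 * b^n) atTop (nhds 0) := hsum.tendsto_atTop_zero
  have hE2 : ∀ᶠ k : ℕ in atTop, (k:ℝ) * b^k ≤ 1/8 := by
    have := ht.eventually (eventually_le_nhds (by norm_num : (0:ℝ) < 1/8))
    simpa using this
  have hE3 : ∀ᶠ k : ℕ in atTop, 8 * |K| / 3 ≤ (k:ℝ) + 1 := by
    obtain ⟨N, hN⟩ := exists_nat_ge (8 * |K| / 3)
    filter_upwards [eventually_ge_atTop N] with k hk
    have : (N:ℝ) ≤ (k:ℝ) := by exact_mod_cast hk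
    linarith
  have hE1 : ∀ᶠ k : ℕ in atTop, 1 ≤ k := eventually_ge_atTop 1
  obtain ⟨k, h2, h3, h1⟩ := (hE2.and (hE3.and hE1)).exists
  refine ⟨k, h1, ?_⟩
  have hC : (4:ℝ)^k ≤ 2 * k * (Nat.choose (2*k) k : ℝ) := by
    have := Nat.four_pow_le_two_mul_self_mul_centralBinom k h1
    rw [Nat.centralBinom] at this
    exact_mod_cast this
  have hk0 : (0:ℝ) < 2 * k := by positivity
  rw [← mul_le_mul_iff_right₀ hk0]
  refine le_trans ?_ hC
  have h4 : ((k:ℝ)+1)^2 ≤ (4:ℝ)^k := by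
    have h2k : (k:ℝ) + 1 ≤ 2^k := by exact_mod_cast Nat.lt_two_pow_self (n := k)
    have : ((4:ℝ))^k = (2^k) * (2^k) := by
      rw [show (4:ℝ) = 2*2 by norm_num, mul_pow]
    rw [this, sq]
    have hp : (0:ℝ) ≤ (k:ℝ)+1 := by positivity
    exact mul_le_mul h2k h2k hp (by positivity)
  have hbk : (0:ℝ) ≤ b^k := pow_nonneg hb0 k
  have hx0 : (0:ℝ) < (4:ℝ)^k := by positivity
  have hm1 : (1:ℝ) ≤ (k:ℝ) := by exact_mod_cast h1
  have key1 : 2*(k:ℝ) * ((4:ℝ)^k * b^k) ≤ (4:ℝ)^k / 4 := by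
    have : 2*(k:ℝ) * ((4:ℝ)^k * b^k) = 2 * (4:ℝ)^k * ((k:ℝ) * b^k) := by ring
    rw [this]
    calc 2 * (4:ℝ)^k * ((k:ℝ) * b^k) ≤ 2 * (4:ℝ)^k * (1/8) :=
          mul_le_mul_of_nonneg_left h2 (by positivity)
      _ = (4:ℝ)^k / 4 := by ring
  have key2 : 2*(k:ℝ) * K ≤ 3/4 * (4:ℝ)^k := by
    have hKabs : K ≤ |K| := le_abs_self K
    have : 2*(k:ℝ) * K ≤ 2*(k:ℝ) * |K| :=
      mul_le_mul_of_nonneg_left hKabs (by positivity)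
    refine this.trans ?_
    have h5 : 2*(k:ℝ)*|K| ≤ 3/4 * ((k:ℝ) * ((k:ℝ)+1)) := by
      have := mul_le_mul_of_nonneg_left h3 (by positivity : (0:ℝ) ≤ 3/4*(k:ℝ))
      calc 2*(k:ℝ)*|K| = 3/4*(k:ℝ) * (8*|K|/3) := by ring
        _ ≤ 3/4*(k:ℝ) * ((k:ℝ)+1) := this
        _ = 3/4 * ((k:ℝ) * ((k:ℝ)+1)) := by ring
    refine h5.trans ?_
    have h6 : (k:ℝ) * ((k:ℝ)+1) ≤ ((k:ℝ)+1)^2 := by nlinarith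
    nlinarith
  rw [mul_pow]
  calc 2*(k:ℝ) * ((4:ℝ)^k * b^k + K) = 2*(k:ℝ)*((4:ℝ)^k*b^k) + 2*(k:ℝ)*K := by ring
    _ ≤ (4:ℝ)^k/4 + 3/4*(4:ℝ)^k := add_le_add key1 key2
    _ = (4:ℝ)^k := by ring
lemma usc_bound {X : Type*} [TopologicalSpace X] {Ω : Set X} (hΩo : IsOpen Ω)
    {w : X → EReal} (husc : UpperSemicontinuousOn w Ω) (hnt : ∀ z ∈ Ω, w z ≠ ⊤)
    {K : Set X} (hK : IsCompact K) (hKΩ : K ⊆ Ω) :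
    ∃ M : ℝ, ∀ x ∈ K, w x ≤ (M : EReal) := by
  classical
  set r : X → ℝ := fun x => if h : ∃ m : ℝ, w x < (m : EReal) then h.choose else 0 with hrdef
  have hr : ∀ x ∈ K, w x < ((r x : ℝ) : EReal) := by
    intro x hx
    have hex : ∃ m : ℝ, w x < (m : EReal) := by
      obtain ⟨m, hm, -⟩ := EReal.exists_between_coe_real
        (lt_top_iff_ne_top.2 (hnt x (hKΩ hx)))
      exact ⟨m, hm⟩
    simp only [hrdef, dif_pos hex]
    exact hex.choose_spec
  have hU : ∀ x ∈ K, {y | w y < ((r x : ℝ) : EReal)} ∈ nhds x := by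
    intro x hx
    have := husc x (hKΩ hx) _ (hr x hx)
    rwa [nhdsWithin_eq_nhds.2 (hΩo.mem_nhds (hKΩ hx))] at this
  obtain ⟨t, htK, hcover⟩ := hK.elim_nhds_subcover _ hU
  by_cases ht : t.Nonempty
  · refine ⟨t.sup' ht r, fun x hx => ?_⟩
    obtain ⟨x₀, hx₀t, hx₀⟩ : ∃ x₀ ∈ t, w x < ((r x₀ : ℝ) : EReal) := by
      have := hcover hx
      simpa using this
    refine le_trans hx₀.le ?_
    exact_mod_cast EReal.coe_le_coe_iff.2 (Finset.le_sup' r hx₀t)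
  · refine ⟨0, fun x hx => absurd (hcover hx) ?_⟩
    simp [Finset.not_nonempty_iff_eq_empty.1 ht]
/-- Spreading step: if `w` is `⊥` on a ball near `z'`, and the setup geometry holds,
then `w z' = ⊥`. -/
lemma spread_bot {n : ℕ} {Ω : Set (Fin n → ℂ)} (hΩo : IsOpen Ω)
    {w : (Fin n → ℂ) → EReal} (hw : IsPSH Ω w)
    {z' c' : Fin n → ℂ} {ρ : ℝ} (hρ0 : 0 < ρ)
    (hbot : ∀ y ∈ Metric.ball c' ρ, w y = ⊥)
    (hz'Ω : z' ∈ Ω)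
    (hdisc : ∀ ζ : ℂ, ‖ζ‖ ≤ 1 → z' + ζ • (c' - z') ∈ Ω)

    (hee : ∀ Δ : ℝ, |Δ| ≤ min 1 (ρ / (5 * (‖c' - z'‖ + 1))) →
      z' + Complex.exp ((Δ : ℂ) * Complex.I) • (c' - z') ∈ Metric.ball c' ρ) :
    w z' = ⊥ := by
  classical
  set e : Fin n → ℂ := c' - z' with hedef
  set η : ℝ := min 1 (ρ / (5 * (‖e‖ + 1))) with hηdef
  have hη0 : 0 < η := by
    apply lt_min one_pos
    positivity
  have hη1 : η ≤ 1 := min_le_left _ _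
  -- compact circle
  set K : Set (Fin n → ℂ) := (fun ζ : ℂ => z' + ζ • e) '' (Metric.sphere 0 1) with hKdef
  have hKc : IsCompact K := by
    apply (isCompact_sphere (0:ℂ) 1).image
    exact continuous_const.add (continuous_id.smul continuous_const)
  have hKΩ : K ⊆ Ω := by
    rintro x ⟨ζ, hζ, rfl⟩
    rw [mem_sphere_zero_iff_norm] at hζ
    exact hdisc ζ hζ.le
  obtain ⟨M, hM⟩ := usc_bound hΩo hw.1 hw.2.1 hKc hKΩ
  -- constants
  set c₀ : ℝ := Real.cos (η / 2) with hc₀def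
  have hc₀1 : c₀ < 1 := by
    have := Real.cos_lt_cos_of_nonneg_of_le_pi le_rfl
      (by linarith [Real.pi_gt_three] : η / 2 ≤ Real.pi) (by linarith : (0:ℝ) < η / 2)
    simpa [Real.cos_zero] using this
  have hc₀m : 0 < c₀ := by
    rw [hc₀def]
    apply Real.cos_pos_of_mem_Ioo
    constructor
    · have := Real.pi_gt_three; linarith
    · have := Real.pi_gt_three; linarith
  set b : ℝ := c₀ ^ 2 with hbdef
  have hb0 : 0 ≤ b := sq_nonneg _
  have hb1 : b < 1 := by rw [hbdef]; nlinarith [hc₀1, hc₀m]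
  -- the per-k estimate
  have hkey : ∀ k : ℕ, w z' ≤ ((M + 1 + (4*b)^k - (Nat.choose (2*k) k : ℝ) : ℝ) : EReal) := by
    intro k
    obtain ⟨P, hPre, hP0⟩ := binom_poly k
    set q : Polynomial ℂ := Polynomial.C ((M + 1 + (4*b)^k : ℝ) : ℂ) - P with hqdef
    have hqre : ∀ ζ : ℂ, (q.eval ζ).re = (M + 1 + (4*b)^k) - (P.eval ζ).re := by
      intro ζ
      rw [hqdef, Polynomial.eval_sub, Polynomial.eval_C, Complex.sub_re, Complex.ofReal_re]
    have hbound : ∀ ζ : ℂ, ‖ζ‖ = 1 →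
        w (z' + ζ • e) ≤ (((q.eval ζ).re : ℝ) : EReal) := by
      intro ζ hζ
      have habs : ‖ζ‖ = 1 := hζ
      set Δ : ℝ := ζ.arg with hΔdef
      have hζeq : ζ = Complex.exp ((Δ : ℂ) * Complex.I) := by
        conv_lhs => rw [← Complex.norm_mul_exp_arg_mul_I ζ]
        rw [habs]
        simp [hΔdef]
      rcases le_or_gt |Δ| η with hle | hgt
      · -- on the arc: w = ⊥
        have := hbot _ (hee Δ hle)
        rw [hζeq]
        rw [hedef] at this ⊢
        rw [this]
        exact bot_le
      · -- off the arc : use M bound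
        have hmem : z' + ζ • e ∈ K := ⟨ζ, by rwa [mem_sphere_zero_iff_norm], rfl⟩
        refine (hM _ hmem).trans ?_
        rw [EReal.coe_le_coe_iff, hqre, hζeq, hPre Δ]
        have hcos : Real.cos Δ ≤ Real.cos η := by
          rw [← Real.cos_abs]
          exact Real.cos_le_cos_of_nonneg_of_le_pi hη0.le (Complex.abs_arg_le_pi ζ) hgt.le
        have h4b : 2 + 2 * Real.cos Δ ≤ 4 * b := by
          have : c₀ ^ 2 = 1/2 + Real.cos η / 2 := by
            rw [hc₀def, Real.cos_sq, mul_div_cancel₀]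
            norm_num
          rw [hbdef, this]
          linarith
        have hnn : (0:ℝ) ≤ 2 + 2 * Real.cos Δ := by
          have := Real.neg_one_le_cos Δ
          linarith
        have := pow_le_pow_left₀ hnn h4b k
        linarith
    have := hw.2.2.2 z' hz'Ω e 1 one_pos hdisc q hbound 0 (by simp)
    simpa [hqre, hP0] using this
  -- conclude via growth
  by_contra hne
  obtain ⟨r, -, hr2⟩ := EReal.exists_between_coe_real (bot_lt_iff_ne_bot.2 hne)
  obtain ⟨k, -, hk⟩ := binom_growth hb0 hb1 (M + 1 - r + 1)
  have : w z' ≤ ((r - 1 : ℝ) : EReal) := by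
    refine (hkey k).trans ?_
    rw [EReal.coe_le_coe_iff]
    linarith
  have : w z' < w z' := lt_of_le_of_lt (this.trans (by exact_mod_cast EReal.coe_le_coe_iff.2 (by linarith : r - 1 ≤ r))) hr2
  exact absurd this (lt_irrefl _)

lemma psh_ne_bot_dense {n : ℕ} {Ω : Set (Fin n → ℂ)} (hΩo : IsOpen Ω)
    (hΩc : IsPreconnected Ω) {w : (Fin n → ℂ) → EReal} (hw : IsPSH Ω w) :
    ∀ z ∈ Ω, ∀ ε : ℝ, 0 < ε → ∃ y, y ∈ Ω ∧ dist y z < ε ∧ w y ≠ ⊥ := by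
  by_contra hcon
  push_neg at hcon
  obtain ⟨z1, hz1, ε, hε, hall⟩ := hcon
  set C : Set (Fin n → ℂ) :=
    {c | ∃ ρ : ℝ, 0 < ρ ∧ Metric.ball c ρ ⊆ Ω ∧ ∀ y ∈ Metric.ball c ρ, w y = ⊥} with hCdef
  have hCopen : IsOpen C := by
    rw [Metric.isOpen_iff]
    rintro c ⟨ρ, hρ0, hρΩ, hρbot⟩
    refine ⟨ρ/2, by positivity, ?_⟩
    intro y hy
    have hsub2 : Metric.ball y (ρ/2) ⊆ Metric.ball c ρ := by
      intro x hx
      rw [Metric.mem_ball] at *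
      have := dist_triangle x y c
      linarith
    exact ⟨ρ/2, by positivity, hsub2.trans hρΩ, fun x hx => hρbot x (hsub2 hx)⟩
  have hz1C : z1 ∈ C := by
    obtain ⟨ε', hε', hb⟩ := Metric.isOpen_iff.1 hΩo z1 hz1
    refine ⟨min ε ε', lt_min hε hε',
      (Metric.ball_subset_ball (min_le_right _ _)).trans hb, ?_⟩
    intro y hy
    rw [Metric.mem_ball] at hy
    exact hall y (hb (by rw [Metric.mem_ball]; exact lt_of_lt_of_le hy (min_le_right _ _)))
      (lt_of_lt_of_le hy (min_le_left _ _))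
  have hclo : closure C ∩ Ω ⊆ C := by
    rintro c ⟨hcc, hcΩ⟩
    obtain ⟨δ4, hδ4, hb4⟩ := Metric.isOpen_iff.1 hΩo c hcΩ
    set δ : ℝ := δ4/4 with hδdef
    have hδ : 0 < δ := by positivity
    obtain ⟨c', hc'C, hc'd⟩ := Metric.mem_closure_iff.1 hcc δ hδ
    obtain ⟨ρ, hρ0, hρΩ, hρbot⟩ := hc'C
    refine ⟨δ, hδ, fun y hy => hb4 (Metric.ball_subset_ball (by linarith) hy), ?_⟩
    intro z' hz'
    rw [Metric.mem_ball] at hz'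
    set e : Fin n → ℂ := c' - z' with hedef
    have hc'e : c' = z' + e := by rw [hedef]; abel
    have hen : ‖e‖ < 2*δ := by
      rw [hedef, ← dist_eq_norm]
      have h1 : dist c' z' ≤ dist c' c + dist c z' := dist_triangle _ _ _
      rw [dist_comm c' c] at h1
      rw [dist_comm z' c] at hz'
      linarith
    have hdisc : ∀ ζ : ℂ, ‖ζ‖ ≤ 1 → z' + ζ • e ∈ Ω := by
      intro ζ hζ
      apply hb4
      rw [Metric.mem_ball]
      have h1 : dist (z' + ζ • e) z' = ‖ζ • e‖ := by
        rw [dist_eq_norm]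
        congr 1
        abel
      have h2 : ‖ζ • e‖ ≤ ‖e‖ := by
        rw [norm_smul]
        nlinarith [norm_nonneg e]
      have := dist_triangle (z' + ζ • e) z' c
      rw [h1] at this
      linarith
    apply spread_bot hΩo hw hρ0 hρbot
      (hb4 (show z' ∈ Metric.ball c δ4 by rw [Metric.mem_ball]; linarith)) hdisc
    -- the arc condition
    intro Δ hΔ
    have hΔ1 : |Δ| ≤ 1 := hΔ.trans (min_le_left _ _)
    have hΔ2 : |Δ| ≤ ρ / (5 * (‖e‖ + 1)) := hΔ.trans (min_le_right _ _)
    rw [Metric.mem_ball, dist_eq_norm]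
    have heq : z' + Complex.exp ((Δ : ℂ) * Complex.I) • e - c'
        = (Complex.exp ((Δ : ℂ) * Complex.I) - 1) • e := by
      rw [sub_smul, one_smul, hc'e]
      abel
    rw [heq, norm_smul]
    have habs : ‖Complex.exp ((Δ : ℂ) * Complex.I) - 1‖ ≤ 2 * |Δ| := by
      have hnorm : ‖(Δ : ℂ) * Complex.I‖ = |Δ| := by
        rw [norm_mul, Complex.norm_I, mul_one, Complex.norm_real, Real.norm_eq_abs]
      have := Complex.norm_exp_sub_one_le (x := (Δ : ℂ) * Complex.I) (by rw [hnorm]; exact hΔ1)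
      rw [hnorm] at this
      exact this
    have hne : (0:ℝ) ≤ ‖e‖ := norm_nonneg e
    have h5 : (0:ℝ) < 5 * (‖e‖ + 1) := by positivity
    have hΔρ : |Δ| * (5 * (‖e‖ + 1)) ≤ ρ := by
      rw [← le_div_iff₀ h5]
      exact hΔ2
    have habs0 : (0:ℝ) ≤ ‖Complex.exp ((Δ : ℂ) * Complex.I) - 1‖ := norm_nonneg _
    calc ‖Complex.exp ((Δ : ℂ) * Complex.I) - 1‖ * ‖e‖ ≤ (2 * |Δ|) * ‖e‖ :=
          mul_le_mul_of_nonneg_right habs hne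
      _ < ρ := by nlinarith [abs_nonneg Δ]
  have hΩC : Ω ⊆ C :=
    hΩc.subset_of_closure_inter_subset hCopen ⟨z1, hz1, hz1C⟩ hclo
  obtain ⟨z0, hz0, hz0ne⟩ := hw.2.2.1
  obtain ⟨ρ, hρ, -, hbot⟩ := hΩC hz0
  exact hz0ne (hbot z0 (Metric.mem_ball_self hρ))
-- === Section E : glue ===

lemma tame_aux {n : ℕ} (Ω : Set (Fin n → ℂ)) (hΩo : IsOpen Ω) (hΩc : IsConnected Ω)
    {u : (Fin n → ℂ) → EReal} (hu : MemM Ω u) (φ : EReal → EReal)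
    (h : ∀ ε : ℝ, 0 < ε → ∃ lam : ℝ, 0 ≤ lam ∧
      ∀ x : EReal, 0 ≤ x → max (φ x - (lam : EReal)) 0 ≤ (ε : EReal) * x) :
    Tame Ω (fun z => φ (u z)) := by
  obtain ⟨hu0, v, hv, huv⟩ := hu
  set f : (Fin n → ℂ) → EReal := fun z => φ (u z) with hfdef
  have hRopnn : ∀ lam : ℝ, ∀ ζ ∈ Ω, (0:EReal) ≤ Rop Ω f lam ζ := by
    intro lam ζ hζ
    apply le_sInf
    rintro y ⟨v', hv', hm, rfl⟩
    exact le_trans (le_max_right _ 0) (hm ζ hζ)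
  have hRople : ∀ ε : ℝ, 0 < ε → ∃ lam : ℝ, 0 ≤ lam ∧
      ∀ ζ : Fin n → ℂ, Rop Ω f lam ζ ≤ (ε:EReal) * v ζ := by
    intro ε hε
    obtain ⟨lam, hlam0, hlam⟩ := h ε hε
    refine ⟨lam, hlam0, fun ζ => sInf_le ⟨fun z => (ε:EReal) * v z, hv.const_mul hε, ?_, rfl⟩⟩
    intro ξ hξ
    exact (hlam (u ξ) (hu0 ξ hξ)).trans (ereal_cmul_mono hε.le (huv ξ hξ))
  set g : (Fin n → ℂ) → EReal :=
    fun z => ⨅ (lam : ℝ) (_ : 0 ≤ lam), Slam Ω f lam z with hgdef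
  have hg0 : ∀ ζ ∈ Ω, (0:EReal) ≤ g ζ := by
    intro ζ hζ
    refine le_iInf fun lam => le_iInf fun hlam => ?_
    exact Filter.le_liminf_of_le (by isBoundedDefault)
      (eventually_mem_nhdsWithin.mono fun ξ hξ => hRopnn lam ξ hξ)
  have hgle : ∀ y ∈ Ω, v y ≠ ⊤ → g y ≤ 0 := by
    intro y hyΩ hyT
    by_contra hpos
    push_neg at hpos
    obtain ⟨c, hc0, hc2⟩ := EReal.exists_between_coe_real hpos
    have hc0' : (0:ℝ) < c := by exact_mod_cast hc0
    have hvy0 : (0:EReal) ≤ v y := le_trans (hu0 y hyΩ) (huv y hyΩ)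
    have hvyB : v y ≠ ⊥ := fun hb => by simp [hb] at hvy0
    set t : ℝ := (v y).toReal with htdef
    have ht0 : 0 ≤ t := by
      rw [htdef]
      have := EReal.toReal_le_toReal hvy0 (by simp) hyT
      simpa using this
    set ε : ℝ := c / (t + 1) with hεdef
    have hε : 0 < ε := by rw [hεdef]; positivity
    obtain ⟨lam, hlam0, hRle⟩ := hRople ε hε
    have h1 : g y ≤ Slam Ω f lam y := iInf₂_le lam hlam0
    have h2 : Slam Ω f lam y ≤ Rop Ω f lam y := by
      apply Filter.liminf_le_of_frequently_le'
      refine Filter.Frequently.filter_mono ?_ (pure_le_nhdsWithin hyΩ)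
      exact Filter.Eventually.frequently (Filter.eventually_pure.2 le_rfl)
    have h3 : Rop Ω f lam y ≤ (ε:EReal) * v y := hRle y
    have h4 : (ε:EReal) * v y = ((ε * t : ℝ) : EReal) := by
      rw [← EReal.coe_toReal hyT hvyB, ← htdef, ← EReal.coe_mul]
    have h5 : ε * t < c := by
      rw [hεdef]
      rw [div_mul_eq_mul_div, div_lt_iff₀ (by positivity)]
      nlinarith
    have : g y < g y :=
      lt_of_le_of_lt (h1.trans (h2.trans (h3.trans_eq h4)))
        (lt_trans (by exact_mod_cast EReal.coe_lt_coe_iff.2 h5) hc2)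
    exact absurd this (lt_irrefl _)
  intro z hz
  show lscReg Ω g z = 0
  rw [lscReg]
  apply le_antisymm
  · apply Filter.liminf_le_of_frequently_le'
    rw [Filter.frequently_iff]
    intro S hS
    obtain ⟨T, hTo, hzT, hTS⟩ := mem_nhdsWithin.1 hS
    obtain ⟨ε, hε, hball⟩ := Metric.isOpen_iff.1 hTo z hzT
    obtain ⟨y, hyΩ, hyd, hyne⟩ := psh_ne_bot_dense hΩo hΩc.isPreconnected hv z hz ε hε
    have hyT : v y ≠ ⊤ := by
      intro hvt
      apply hyne
      simp [hvt]
    exact ⟨y, hTS ⟨hball (by rwa [Metric.mem_ball]), hyΩ⟩, hgle y hyΩ hyT⟩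
  · exact Filter.le_liminf_of_le (by isBoundedDefault)
      (eventually_mem_nhdsWithin.mono fun ξ hξ => hg0 ξ hξ)
/-- Corollary 3.3, remaining parts: let `Ω ⊆ ℂⁿ` be a bounded domain,
let `u ∈ ℳ` and let `0 < α < 1`. Then `log⁺ u` and `u^α · log⁺ u` are tame. -/
theorem statement9 {n : ℕ} (Ω : Set (Fin n → ℂ))
    (hΩo : IsOpen Ω) (hΩc : IsConnected Ω) (hΩb : Bornology.IsBounded Ω)
    (u : (Fin n → ℂ) → EReal) (hu : MemM Ω u) (α : ℝ) (hα0 : 0 < α) (hα1 : α < 1) :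
    Tame Ω (fun z => erealLogPlus (u z)) ∧
    Tame Ω (fun z => erealRpow (u z) α * erealLogPlus (u z)) := by
  constructor
  · apply tame_aux Ω hΩo hΩc hu erealLogPlus
    intro ε hε
    obtain ⟨lam, hlam0, hlam⟩ := logplus_lin hε
    refine ⟨lam, hlam0, fun x hx => ?_⟩
    induction x using EReal.rec with
    | bot => exact absurd hx (by simp)
    | coe r =>
        have hr : 0 ≤ r := by exact_mod_cast hx
        have h1 : erealLogPlus (r : EReal) = ((max (Real.log r) 0 : ℝ) : EReal) := by
          rw [erealLogPlus, if_neg (EReal.coe_ne_top r), EReal.toReal_coe]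
        rw [h1, ← EReal.coe_sub, ← EReal.coe_mul, ← EReal.coe_zero,
          ← EReal.coe_strictMono.monotone.map_max]
        exact EReal.coe_le_coe_iff.2 (hlam r hr)
    | top =>
        have h1 : erealLogPlus (⊤ : EReal) = ⊤ := by rw [erealLogPlus, if_pos rfl]
        rw [h1, EReal.top_sub_coe, max_eq_left le_top, EReal.coe_mul_top_of_pos hε]
  · apply tame_aux Ω hΩo hΩc hu (fun x => erealRpow x α * erealLogPlus x)
    intro ε hε
    obtain ⟨lam, hlam0, hlam⟩ := rpow_logplus_lin hα0 hα1 hε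
    refine ⟨lam, hlam0, fun x hx => ?_⟩
    induction x using EReal.rec with
    | bot => exact absurd hx (by simp)
    | coe r =>
        have hr : 0 ≤ r := by exact_mod_cast hx
        have h1 : erealLogPlus (r : EReal) = ((max (Real.log r) 0 : ℝ) : EReal) := by
          rw [erealLogPlus, if_neg (EReal.coe_ne_top r), EReal.toReal_coe]
        have h2 : erealRpow (r : EReal) α = ((r ^ α : ℝ) : EReal) := by
          rw [erealRpow, if_neg (EReal.coe_ne_top r), EReal.toReal_coe]
        simp only [h1, h2, ← EReal.coe_mul, ← EReal.coe_sub, ← EReal.coe_zero,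
          ← EReal.coe_strictMono.monotone.map_max]
        exact EReal.coe_le_coe_iff.2 (hlam r hr)
    | top =>
        have h1 : erealLogPlus (⊤ : EReal) = ⊤ := by rw [erealLogPlus, if_pos rfl]
        have h2 : erealRpow (⊤ : EReal) α = ⊤ := by rw [erealRpow, if_pos rfl]
        simp only [h1, h2, EReal.top_mul_top, EReal.top_sub_coe, max_eq_left le_top,
          EReal.coe_mul_top_of_pos hε, le_refl]
end
end

section
/- Let 𝔹 = {(z, w) ∈ ℂ² : |z|² + |w|² < 1} be the unit ball, let 0 < α ≤ 1, and let φ(z, w) = (−log|z|)^α (with value +∞ when z = 0). Then the Perron–Bremermann envelope of φ over the plurisubharmonic functions on 𝔹 is given explicitly by Pφ(z, w) = (−(1/2)·log(1 − |w|²))^α for all (z, w) ∈ 𝔹. In particular, the function U(z, w) = (−(1/2)·log(1 − |w|²))^α is plurisubharmonic on 𝔹, and every plurisubharmonic u on 𝔹 with u ≤ φ satisfies u ≤ U. -/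
open Complex Polynomial Filter Set Topology

noncomputable section

namespace St18

noncomputable def ufun (τ : ℝ) : ℝ := -(1/2 : ℝ) * Real.log (1 - Real.exp (2*τ))
noncomputable def Vfun (α τ : ℝ) : ℝ := (ufun τ) ^ α
noncomputable def wfun (τ : ℝ) : ℝ := Real.exp (2*τ) / (1 - Real.exp (2*τ))
noncomputable def Vd (α τ : ℝ) : ℝ := α * (ufun τ) ^ (α - 1) * wfun τ

lemma q_lt_one {τ : ℝ} (hτ : τ < 0) : Real.exp (2*τ) < 1 := by
  rw [Real.exp_lt_one_iff]; linarith

lemma one_sub_q_pos {τ : ℝ} (hτ : τ < 0) : 0 < 1 - Real.exp (2*τ) := by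
  linarith [q_lt_one hτ]

lemma ufun_pos {τ : ℝ} (hτ : τ < 0) : 0 < ufun τ := by
  have h1 : Real.log (1 - Real.exp (2*τ)) < 0 :=
    Real.log_neg (one_sub_q_pos hτ) (by linarith [Real.exp_pos (2*τ)])
  unfold ufun; nlinarith

lemma wfun_pos {τ : ℝ} (hτ : τ < 0) : 0 < wfun τ :=
  div_pos (Real.exp_pos _) (one_sub_q_pos hτ)

lemma Vd_pos {α τ : ℝ} (hα0 : 0 < α) (hτ : τ < 0) : 0 < Vd α τ :=
  mul_pos (mul_pos hα0 (Real.rpow_pos_of_pos (ufun_pos hτ) _)) (wfun_pos hτ)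

lemma hasDerivAt_q (τ : ℝ) : HasDerivAt (fun τ : ℝ => Real.exp (2*τ)) (2 * Real.exp (2*τ)) τ := by
  have h1 : HasDerivAt (fun τ : ℝ => 2*τ) 2 τ := by
    simpa using (hasDerivAt_id τ).const_mul (2:ℝ)
  simpa [mul_comm] using h1.exp

lemma hasDerivAt_ufun {τ : ℝ} (hτ : τ < 0) : HasDerivAt ufun (wfun τ) τ := by
  have h2 : HasDerivAt (fun τ : ℝ => 1 - Real.exp (2*τ)) (-(2 * Real.exp (2*τ))) τ :=
    (hasDerivAt_q τ).const_sub 1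
  have h3 := (h2.log (ne_of_gt (one_sub_q_pos hτ))).const_mul (-(1/2 : ℝ))
  have : ufun = fun τ : ℝ => -(1/2 : ℝ) * Real.log (1 - Real.exp (2*τ)) := rfl
  rw [this]
  refine h3.congr_deriv ?_
  unfold wfun; field_simp

lemma hasDerivAt_wfun {τ : ℝ} (hτ : τ < 0) :
    HasDerivAt wfun (2 * Real.exp (2*τ) / (1 - Real.exp (2*τ))^2) τ := by
  have h2 : HasDerivAt (fun τ : ℝ => 1 - Real.exp (2*τ)) (-(2 * Real.exp (2*τ))) τ :=
    (hasDerivAt_q τ).const_sub 1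
  have h3 := (hasDerivAt_q τ).div h2 (ne_of_gt (one_sub_q_pos hτ))
  have hwf : wfun = fun τ : ℝ => Real.exp (2*τ) / (1 - Real.exp (2*τ)) := rfl
  rw [hwf]
  refine h3.congr_deriv ?_
  have h1q := one_sub_q_pos hτ
  field_simp
  ring

lemma hasDerivAt_Vfun {α τ : ℝ} (hτ : τ < 0) : HasDerivAt (Vfun α) (Vd α τ) τ := by
  have h := (hasDerivAt_ufun hτ).rpow_const (p := α) (Or.inl (ne_of_gt (ufun_pos hτ)))
  have hvf : Vfun α = fun τ : ℝ => ufun τ ^ α := rfl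
  rw [hvf]
  convert h using 1
  unfold Vd; ring

lemma hasDerivAt_Vd {α τ : ℝ} (hτ : τ < 0) :
    HasDerivAt (Vd α)
      (α * ((α-1) * (ufun τ) ^ (α - 2) * wfun τ) * wfun τ
        + α * (ufun τ) ^ (α - 1) * (2 * Real.exp (2*τ) / (1 - Real.exp (2*τ))^2)) τ := by
  have h1 : HasDerivAt (fun τ => α * (ufun τ) ^ (α - 1))
      (α * ((α-1) * (ufun τ) ^ (α - 1 - 1) * wfun τ)) τ := by
    have := ((hasDerivAt_ufun hτ).rpow_const (p := α - 1)
      (Or.inl (ne_of_gt (ufun_pos hτ)))).const_mul α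
    refine this.congr_deriv ?_
    ring
  have h2 := h1.mul (hasDerivAt_wfun hτ)
  have : α - 1 - 1 = α - 2 := by ring
  rw [this] at h2
  exact h2

lemma Vd_deriv_nonneg {α τ : ℝ} (hα0 : 0 < α) (hα1 : α ≤ 1) (hτ : τ < 0) :
    0 ≤ α * ((α-1) * (ufun τ) ^ (α - 2) * wfun τ) * wfun τ
        + α * (ufun τ) ^ (α - 1) * (2 * Real.exp (2*τ) / (1 - Real.exp (2*τ))^2) := by
  set q := Real.exp (2*τ) with hq
  have hq0 : 0 < q := Real.exp_pos _
  have hq1 : q < 1 := q_lt_one hτ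
  have hu : 0 < ufun τ := ufun_pos hτ
  have hA : 0 < (ufun τ) ^ (α - 2) := Real.rpow_pos_of_pos hu _
  have hsplit : (ufun τ) ^ (α - 1) = (ufun τ) ^ (α - 2) * ufun τ := by
    rw [show α - 1 = (α - 2) + 1 by ring, Real.rpow_add hu, Real.rpow_one]
  have hw : wfun τ = q / (1 - q) := rfl
  have hkey : 2 * ufun τ ≥ (1 - α) * q := by
    have hlog : Real.log (1 - q) ≤ -q := by
      have := Real.log_le_sub_one_of_pos (one_sub_q_pos hτ)
      linarith
    have h2u : 2 * ufun τ = -Real.log (1 - q) := by unfold ufun; ring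
    nlinarith
  have h1q : 0 < 1 - q := one_sub_q_pos hτ
  rw [hsplit, hw]
  have hexpand : α * ((α-1) * (ufun τ) ^ (α - 2) * (q / (1-q))) * (q / (1-q))
        + α * ((ufun τ) ^ (α - 2) * ufun τ) * (2 * q / (1-q)^2)
      = α * (ufun τ) ^ (α - 2) * (q / (1-q)^2) * ((α - 1) * q + 2 * ufun τ) := by
    field_simp
  rw [hexpand]
  have h4 : 0 ≤ (α - 1) * q + 2 * ufun τ := by nlinarith
  positivity

lemma Vd_monotoneOn {α : ℝ} (hα0 : 0 < α) (hα1 : α ≤ 1) {τ₀ τ₁ : ℝ}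
    (h₀ : τ₀ < 0) (h₁ : τ₁ < 0) (h : τ₀ ≤ τ₁) : Vd α τ₀ ≤ Vd α τ₁ := by
  rcases eq_or_lt_of_le h with rfl | hlt
  · exact le_refl _
  · have hcont : ContinuousOn (Vd α) (Icc τ₀ τ₁) := by
      intro x hx
      have hx0 : x < 0 := lt_of_le_of_lt hx.2 h₁
      exact ((hasDerivAt_Vd (α := α) hx0).continuousAt).continuousWithinAt
    obtain ⟨c, hc, hceq⟩ := exists_hasDerivAt_eq_slope (Vd α)
      (fun τ => α * ((α-1) * (ufun τ) ^ (α - 2) * wfun τ) * wfun τ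
        + α * (ufun τ) ^ (α - 1) * (2 * Real.exp (2*τ) / (1 - Real.exp (2*τ))^2))
      hlt hcont (fun x hx => hasDerivAt_Vd (lt_trans hx.2 h₁))
    have hc0 : c < 0 := lt_trans hc.2 h₁
    have hnn := Vd_deriv_nonneg hα0 hα1 hc0
    rw [hceq] at hnn
    have hpos : (0:ℝ) < τ₁ - τ₀ := sub_pos.mpr hlt
    have := mul_nonneg hnn (le_of_lt hpos)
    rw [div_mul_cancel₀ _ (ne_of_gt hpos)] at this
    linarith

lemma support_line {α : ℝ} (hα0 : 0 < α) (hα1 : α ≤ 1) {τ₀ τ : ℝ}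
    (h₀ : τ₀ < 0) (h : τ < 0) :
    Vfun α τ₀ + Vd α τ₀ * (τ - τ₀) ≤ Vfun α τ := by
  rcases lt_trichotomy τ₀ τ with hlt | rfl | hgt
  · have hcont : ContinuousOn (Vfun α) (Icc τ₀ τ) := fun x hx =>
      ((hasDerivAt_Vfun (α := α) (lt_of_le_of_lt hx.2 h)).continuousAt).continuousWithinAt
    obtain ⟨c, hc, hceq⟩ := exists_hasDerivAt_eq_slope (Vfun α) (Vd α) hlt hcont
      (fun x hx => hasDerivAt_Vfun (lt_trans hx.2 h))
    have hc0 : c < 0 := lt_trans hc.2 h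
    have hmono : Vd α τ₀ ≤ Vd α c := Vd_monotoneOn hα0 hα1 h₀ hc0 (le_of_lt hc.1)
    have hpos : (0:ℝ) < τ - τ₀ := sub_pos.mpr hlt
    have : Vfun α τ - Vfun α τ₀ = Vd α c * (τ - τ₀) := by
      rw [hceq]; field_simp
    nlinarith
  · simp
  · have hcont : ContinuousOn (Vfun α) (Icc τ τ₀) := fun x hx =>
      ((hasDerivAt_Vfun (α := α) (lt_of_le_of_lt hx.2 h₀)).continuousAt).continuousWithinAt
    obtain ⟨c, hc, hceq⟩ := exists_hasDerivAt_eq_slope (Vfun α) (Vd α) hgt hcont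
      (fun x hx => hasDerivAt_Vfun (lt_trans hx.2 h₀))
    have hc0 : c < 0 := lt_trans hc.2 h₀
    have hmono : Vd α c ≤ Vd α τ₀ := Vd_monotoneOn hα0 hα1 hc0 h₀ (le_of_lt hc.2)
    have hpos : (0:ℝ) < τ₀ - τ := sub_pos.mpr hgt
    have : Vfun α τ₀ - Vfun α τ = Vd α c * (τ₀ - τ) := by
      rw [hceq]; field_simp
    nlinarith

lemma Vfun_log {α t : ℝ} (ht : 0 < t) :
    Vfun α (Real.log t) = (-(1/2 : ℝ) * Real.log (1 - t^2)) ^ α := by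
  unfold Vfun ufun
  rw [show (2:ℝ) * Real.log t = Real.log t + Real.log t by ring, Real.exp_add,
    Real.exp_log ht, ← pow_two]

lemma maxmod {f : ℂ → ℂ} (hf : Differentiable ℂ f) {r : ℝ} (hr : 0 < r)
    (hb : ∀ ζ : ℂ, ‖ζ‖ = r → ‖f ζ‖ ≤ 1) {ζ : ℂ} (hζ : ‖ζ‖ ≤ r) : ‖f ζ‖ ≤ 1 := by
  have h1 : ζ ∈ closure (Metric.ball (0:ℂ) r) := by
    rw [closure_ball (0:ℂ) (ne_of_gt hr)]
    simpa [Metric.mem_closedBall, dist_zero_right] using hζ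
  refine Complex.norm_le_of_forall_mem_frontier_norm_le Metric.isBounded_ball
    hf.diffContOnCl ?_ h1
  intro z hz
  rw [frontier_ball (0:ℂ) (ne_of_gt hr)] at hz
  exact hb z (by simpa [mem_sphere_iff_norm] using hz)

end St18

/-- The open unit ball in `ℂ²`. -/
def unitBall2 : Set (Fin 2 → ℂ) := { p | ‖p 0‖ ^ 2 + ‖p 1‖ ^ 2 < 1 }

/-- Example 4.10: on the unit ball `𝔹 ⊆ ℂ²`, for `0 < α ≤ 1` and
`φ(z, w) = (−log|z|)^α` (equal to `+∞` when `z = 0`), the Perron–Bremermann envelope of `φ`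
over the plurisubharmonic functions on `𝔹` equals `U(z, w) = (−(1/2)·log(1 − |w|²))^α` on
`𝔹`. In particular `U` is plurisubharmonic on `𝔹`, and every plurisubharmonic `u ≤ φ` on
`𝔹` satisfies `u ≤ U` on `𝔹`. -/
theorem statement18 (α : ℝ) (hα0 : 0 < α) (hα1 : α ≤ 1)
    (φ U : (Fin 2 → ℂ) → EReal)
    (hφ : ∀ p : Fin 2 → ℂ,
      φ p = if p 0 = 0 then (⊤ : EReal) else (((-Real.log ‖p 0‖) ^ α : ℝ) : EReal))
    (hU : ∀ p : Fin 2 → ℂ,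
      U p = ((((-(1 / 2 : ℝ)) * Real.log (1 - ‖p 1‖ ^ 2)) ^ α : ℝ) : EReal)) :
    (∀ p ∈ unitBall2,
      sSup { y | ∃ u, IsPSH unitBall2 u ∧ (∀ q ∈ unitBall2, u q ≤ φ q) ∧ y = u p }
        = U p) ∧
    IsPSH unitBall2 U ∧
    (∀ u, IsPSH unitBall2 u → (∀ p ∈ unitBall2, u p ≤ φ p) →
      ∀ p ∈ unitBall2, u p ≤ U p) := by
  -- nonnegativity of the base of U on the ball
  have hUnonneg : ∀ q ∈ unitBall2, (0:ℝ) ≤ (-(1/2 : ℝ)) * Real.log (1 - ‖q 1‖^2) := by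
    intro q hq
    have hq' : ‖q 0‖^2 + ‖q 1‖^2 < 1 := hq
    have h2 : Real.log (1 - ‖q 1‖^2) ≤ 0 :=
      Real.log_nonpos (by nlinarith [sq_nonneg ‖q 0‖, sq_nonneg ‖q 1‖])
        (by nlinarith [sq_nonneg ‖q 1‖])
    nlinarith
  -- Part (b)
  have partB : ∀ u, IsPSH unitBall2 u → (∀ p ∈ unitBall2, u p ≤ φ p) →
      ∀ p ∈ unitBall2, u p ≤ U p := by
    intro u hu hle p hp
    obtain ⟨husc, hnt, hnb, hmax⟩ := hu
    have hp' : ‖p 0‖^2 + ‖p 1‖^2 < 1 := hp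
    have hs2 : ‖p 1‖^2 < 1 := by nlinarith [sq_nonneg ‖p 0‖]
    have hx : (0:ℝ) < 1 - ‖p 1‖^2 := by linarith
    set R := Real.sqrt (1 - ‖p 1‖^2) with hRdef
    have hR0 : 0 < R := Real.sqrt_pos.mpr hx
    have hR2 : R^2 = 1 - ‖p 1‖^2 := Real.sq_sqrt hx.le
    have hp0R : ‖p 0‖ < R := by
      nlinarith [norm_nonneg (p 0), hR0]
    set e : Fin 2 → ℂ := fun i => if i = 0 then 1 else 0 with hedef
    set z' : Fin 2 → ℂ := fun i => if i = 0 then 0 else p i with hzdef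
    have hc0 : ∀ ζ : ℂ, (z' + ζ • e) 0 = ζ := by
      intro ζ; simp [hzdef, hedef]
    have hc1 : ∀ ζ : ℂ, (z' + ζ • e) 1 = p 1 := by
      intro ζ; simp [hzdef, hedef]
    have key : ∀ r : ℝ, ‖p 0‖ ≤ r → 0 < r → r < R →
        u p ≤ (((-Real.log r) ^ α : ℝ) : EReal) := by
      intro r hr1 hr0 hrR
      have hmem : ∀ ζ : ℂ, ‖ζ‖ ≤ r → z' + ζ • e ∈ unitBall2 := by
        intro ζ hζ
        show ‖(z' + ζ • e) 0‖^2 + ‖(z' + ζ • e) 1‖^2 < 1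
        rw [hc0 ζ, hc1 ζ]
        have h1 : ‖ζ‖^2 ≤ r^2 := by nlinarith [norm_nonneg ζ]
        nlinarith [mul_pos (sub_pos.mpr hrR) (show (0:ℝ) < R + r by linarith)]
      have hz'mem : z' ∈ unitBall2 := by
        have := hmem 0 (by simpa using hr0.le)
        simpa using this
      have hcirc : ∀ ζ : ℂ, ‖ζ‖ = r →
          u (z' + ζ • e) ≤
            ((((Polynomial.C ((((-Real.log r) ^ α : ℝ) : ℝ) : ℂ)).eval ζ).re : ℝ) : EReal) := by
        intro ζ hζ
        have hmemζ := hmem ζ (le_of_eq hζ)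
        have hne : ζ ≠ 0 := by
          intro h; rw [h, norm_zero] at hζ; exact (ne_of_gt hr0) hζ.symm
        have h1 := hle _ hmemζ
        rw [hφ _, hc0 ζ, if_neg hne, hζ] at h1
        simpa [Polynomial.eval_C] using h1
      have hconc := hmax z' hz'mem e r hr0 hmem
        (Polynomial.C ((((-Real.log r) ^ α : ℝ) : ℝ) : ℂ)) hcirc (p 0) hr1
      have hpe : z' + (p 0) • e = p := by
        funext i
        fin_cases i <;> simp [hzdef, hedef]
      rw [hpe] at hconc
      simpa [Polynomial.eval_C] using hconc
    have hmlt : max ‖p 0‖ (R/2) < R := max_lt hp0R (by linarith)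
    have hcont : ContinuousAt (fun r : ℝ => (((-Real.log r) ^ α : ℝ) : EReal)) R := by
      have h1 : ContinuousAt (fun r : ℝ => -Real.log r) R :=
        (Real.continuousAt_log (ne_of_gt hR0)).neg
      have h2 : ContinuousAt (fun x : ℝ => x ^ α) (-Real.log R) :=
        Real.continuousAt_rpow_const _ α (Or.inr hα0.le)
      have h3 : ContinuousAt (fun r : ℝ => (-Real.log r) ^ α) R :=
        ContinuousAt.rpow_const h1 (Or.inr hα0.le)
      exact (continuous_coe_real_ereal.tendsto ((-Real.log R) ^ α)).comp h3
    have hval : -Real.log R = (-(1/2 : ℝ)) * Real.log (1 - ‖p 1‖^2) := by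
      rw [hRdef, Real.log_sqrt hx.le]; ring
    have hlim : Tendsto (fun r : ℝ => (((-Real.log r) ^ α : ℝ) : EReal)) (𝓝[<] R)
        (𝓝 (U p)) := by
      have h3 := hcont.tendsto.mono_left (nhdsWithin_le_nhds (s := Iio R))
      rw [hU p, ← hval]
      exact h3
    refine ge_of_tendsto hlim ?_
    have hev1 : ∀ᶠ r in 𝓝[<] R, max ‖p 0‖ (R/2) < r :=
      (eventually_gt_nhds hmlt).filter_mono nhdsWithin_le_nhds
    filter_upwards [hev1, self_mem_nhdsWithin] with r h1 h2
    have hr0 : 0 < r := lt_of_lt_of_le (by linarith : (0:ℝ) < R/2)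
      ((le_max_right _ _).trans h1.le)
    exact key r ((le_max_left _ _).trans h1.le) hr0 h2
  -- U ≤ φ on the ball
  have hUφ : ∀ q ∈ unitBall2, U q ≤ φ q := by
    intro q hq
    rw [hφ q, hU q]
    by_cases h0 : q 0 = 0
    · rw [if_pos h0]; exact le_top
    · rw [if_neg h0]
      have hq' : ‖q 0‖^2 + ‖q 1‖^2 < 1 := hq
      have ht0 : 0 < ‖q 0‖ := norm_pos_iff.mpr h0
      have hs2 : ‖q 1‖^2 < 1 := by nlinarith [sq_nonneg ‖q 0‖]
      have hx : (0:ℝ) < 1 - ‖q 1‖^2 := by linarith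
      have hlog : Real.log (‖q 0‖^2) ≤ Real.log (1 - ‖q 1‖^2) :=
        (Real.log_le_log_iff (by positivity) hx).mpr (by linarith)
      rw [Real.log_pow] at hlog
      have hb : (-(1/2:ℝ)) * Real.log (1 - ‖q 1‖^2) ≤ -Real.log ‖q 0‖ := by
        push_cast at hlog; linarith
      exact EReal.coe_le_coe_iff.mpr (Real.rpow_le_rpow (hUnonneg q hq) hb hα0.le)
  -- Part (a): U is plurisubharmonic
  have partA : IsPSH unitBall2 U := by
    refine ⟨?_, ?_, ?_, ?_⟩
    · -- upper semicontinuity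
      have hcont : ContinuousOn U unitBall2 := by
        have hfun : U = (fun x : ℝ => (x : EReal)) ∘
            (fun p : Fin 2 → ℂ => ((-(1/2 : ℝ)) * Real.log (1 - ‖p 1‖^2)) ^ α) := by
          funext p; rw [hU p]; norm_num
        rw [hfun]
        refine Continuous.comp_continuousOn continuous_coe_real_ereal ?_
        intro q hq
        have hq' : ‖q 0‖^2 + ‖q 1‖^2 < 1 := hq
        have hx : (0:ℝ) < 1 - ‖q 1‖^2 := by nlinarith [sq_nonneg ‖q 0‖]
        apply ContinuousAt.continuousWithinAt
        have hinner : ContinuousAt (fun p : Fin 2 → ℂ => 1 - ‖p 1‖^2) q :=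
          (continuous_const.sub
            (((continuous_apply (1 : Fin 2)).norm).pow 2)).continuousAt
        have hlogc : ContinuousAt (fun p : Fin 2 → ℂ => Real.log (1 - ‖p 1‖^2)) q :=
          ContinuousAt.log hinner (ne_of_gt hx)
        have hb : ContinuousAt (fun p : Fin 2 → ℂ =>
            (-(1/2 : ℝ)) * Real.log (1 - ‖p 1‖^2)) q := continuousAt_const.mul hlogc
        exact ContinuousAt.rpow_const hb (Or.inr hα0.le)
      exact hcont.upperSemicontinuousOn
    · intro z hz; rw [hU z]; exact EReal.coe_ne_top _
    · refine ⟨0, ?_, ?_⟩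
      · show ‖(0 : Fin 2 → ℂ) 0‖^2 + ‖(0 : Fin 2 → ℂ) 1‖^2 < 1
        norm_num
      · rw [hU 0]; exact EReal.coe_ne_bot _
    · intro z hz w r hr hdisc P hcirc ζ₁ hζ₁
      have hq1lt : ∀ ζ : ℂ, ‖ζ‖ ≤ r → ‖(z + ζ • w) 1‖ < 1 := by
        intro ζ hζ
        have h' : ‖(z + ζ • w) 0‖^2 + ‖(z + ζ • w) 1‖^2 < 1 := hdisc ζ hζ
        nlinarith [sq_nonneg ‖(z + ζ • w) 0‖, norm_nonneg ((z + ζ • w) 1)]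
      have hbase : ∀ ζ : ℂ, ‖ζ‖ ≤ r →
          (0:ℝ) ≤ (-(1/2:ℝ)) * Real.log (1 - ‖(z + ζ • w) 1‖^2) :=
        fun ζ hζ => hUnonneg _ (hdisc ζ hζ)
      have hcoord : ∀ ζ : ℂ, (z + ζ • w) 1 = z 1 + ζ * w 1 := by
        intro ζ; simp
      by_cases hq1 : (z + ζ₁ • w) 1 = 0
      · -- the point is on {w = 0}: U = 0 there, use minimum principle for Re P
        have hn0 : ‖(z + ζ₁ • w) 1‖ = 0 := norm_eq_zero.mpr hq1
        have hval : ((-(1/2:ℝ)) * Real.log (1 - ‖(z + ζ₁ • w) 1‖^2)) ^ α = 0 := by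
          rw [hn0]
          simp [Real.log_one, Real.zero_rpow (ne_of_gt hα0)]
        rw [hU _, hval]
        refine EReal.coe_le_coe_iff.mpr ?_
        have hG : Differentiable ℂ (fun ζ : ℂ => Complex.exp (-(P.eval ζ))) :=
          Complex.differentiable_exp.comp (P.differentiable.neg)
        have hGb : ∀ ζ : ℂ, ‖ζ‖ = r → ‖Complex.exp (-(P.eval ζ))‖ ≤ 1 := by
          intro ζ hζ
          have h1 := hcirc ζ hζ
          rw [hU _] at h1
          have h3 : (0:ℝ) ≤ ((-(1/2:ℝ)) * Real.log (1 - ‖(z + ζ • w) 1‖^2)) ^ α :=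
            Real.rpow_nonneg (hbase ζ (le_of_eq hζ)) α
          have h4 := EReal.coe_le_coe_iff.mp h1
          rw [Complex.norm_exp]
          simp only [Complex.neg_re]
          exact Real.exp_le_one_iff.mpr (by linarith)
        have h5 := St18.maxmod hG hr hGb hζ₁
        rw [Complex.norm_exp] at h5
        simp only [Complex.neg_re] at h5
        have h6 := Real.exp_le_one_iff.mp h5
        linarith
      · -- generic point: use the supporting line of the convex profile
        have hq1pos : 0 < ‖(z + ζ₁ • w) 1‖ := norm_pos_iff.mpr hq1
        have hq1lt' : ‖(z + ζ₁ • w) 1‖ < 1 := hq1lt ζ₁ hζ₁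
        set τ₀ := Real.log ‖(z + ζ₁ • w) 1‖ with hτ₀def
        have hτ₀ : τ₀ < 0 := Real.log_neg hq1pos hq1lt'
        set a := St18.Vd α τ₀ with hadef
        have ha : 0 < a := St18.Vd_pos hα0 hτ₀
        set b := St18.Vfun α τ₀ - a * τ₀ with hbdef
        have hsupp : ∀ τ : ℝ, τ < 0 → a * τ + b ≤ St18.Vfun α τ := by
          intro τ hτ
          have h1 := St18.support_line hα0 hα1 hτ₀ hτ
          have h2 : a * τ + b = St18.Vfun α τ₀ + a * (τ - τ₀) := by rw [hbdef]; ring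
          rw [h2]
          exact h1
        set G : ℂ → ℂ :=
          fun ζ => (z 1 + ζ * w 1) * Complex.exp (((b:ℂ) - P.eval ζ) / (a:ℂ)) with hGdef
        have hGdiff : Differentiable ℂ G := by
          apply Differentiable.mul
          · exact (differentiable_const _).add (differentiable_id.mul_const _)
          · exact Complex.differentiable_exp.comp
              (((differentiable_const _).sub P.differentiable).div_const _)
        have hGnorm : ∀ ζ : ℂ,
            ‖G ζ‖ = ‖z 1 + ζ * w 1‖ * Real.exp ((b - (P.eval ζ).re)/a) := by
          intro ζ
          rw [hGdef]
          rw [norm_mul, Complex.norm_exp]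
          congr 2
          simp [Complex.div_ofReal_re, Complex.sub_re, Complex.ofReal_re]
        have hGb : ∀ ζ : ℂ, ‖ζ‖ = r → ‖G ζ‖ ≤ 1 := by
          intro ζ hζ
          rw [hGnorm, ← hcoord ζ]
          have hRe : ((-(1/2:ℝ)) * Real.log (1 - ‖(z + ζ • w) 1‖^2)) ^ α ≤ (P.eval ζ).re := by
            have h1 := hcirc ζ hζ
            rw [hU _] at h1
            exact EReal.coe_le_coe_iff.mp h1
          by_cases ht0 : ‖(z + ζ • w) 1‖ = 0
          · rw [ht0, zero_mul]; exact zero_le_one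
          · have htpos : 0 < ‖(z + ζ • w) 1‖ :=
              lt_of_le_of_ne (norm_nonneg _) (Ne.symm ht0)
            have htlt : ‖(z + ζ • w) 1‖ < 1 := hq1lt ζ (le_of_eq hζ)
            have hτ : Real.log ‖(z + ζ • w) 1‖ < 0 := Real.log_neg htpos htlt
            have hVle : St18.Vfun α (Real.log ‖(z + ζ • w) 1‖) ≤ (P.eval ζ).re := by
              rw [St18.Vfun_log htpos]
              exact hRe
            have h5 : a * Real.log ‖(z + ζ • w) 1‖ + b ≤ (P.eval ζ).re :=
              le_trans (hsupp _ hτ) hVle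
            have h6 : Real.log ‖(z + ζ • w) 1‖ ≤ ((P.eval ζ).re - b)/a := by
              rw [le_div_iff₀ ha]; nlinarith
            have h7 : ‖(z + ζ • w) 1‖ ≤ Real.exp (((P.eval ζ).re - b)/a) :=
              (Real.log_le_iff_le_exp htpos).mp h6
            calc ‖(z + ζ • w) 1‖ * Real.exp ((b - (P.eval ζ).re)/a)
                ≤ Real.exp (((P.eval ζ).re - b)/a) * Real.exp ((b - (P.eval ζ).re)/a) :=
                  mul_le_mul_of_nonneg_right h7 (Real.exp_nonneg _)
              _ = 1 := by
                  rw [← Real.exp_add,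
                    show ((P.eval ζ).re - b)/a + (b - (P.eval ζ).re)/a = 0 by ring,
                    Real.exp_zero]
        have h8 := St18.maxmod hGdiff hr hGb hζ₁
        rw [hGnorm, ← hcoord ζ₁] at h8
        have h9 : ‖(z + ζ₁ • w) 1‖ ≤ Real.exp (((P.eval ζ₁).re - b)/a) := by
          have hXpos : 0 < Real.exp ((b - (P.eval ζ₁).re)/a) := Real.exp_pos _
          rw [show ((P.eval ζ₁).re - b)/a = -((b - (P.eval ζ₁).re)/a) by ring,
            Real.exp_neg, ← one_div, le_div_iff₀ hXpos]
          exact h8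
        have h10 : τ₀ ≤ ((P.eval ζ₁).re - b)/a := by
          rw [hτ₀def]; exact (Real.log_le_iff_le_exp hq1pos).mpr h9
        have h11 : a * τ₀ + b ≤ (P.eval ζ₁).re := by
          rw [le_div_iff₀ ha] at h10; nlinarith
        have h12 : St18.Vfun α τ₀ ≤ (P.eval ζ₁).re := by
          rw [hbdef] at h11; linarith
        rw [hU _]
        refine EReal.coe_le_coe_iff.mpr ?_
        rw [← St18.Vfun_log hq1pos, ← hτ₀def]
        exact h12
  refine ⟨?_, partA, partB⟩
  intro p hp
  apply le_antisymm
  · apply sSup_le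
    rintro y ⟨u, hu, hule, rfl⟩
    exact partB u hu hule p hp
  · exact le_sSup ⟨U, partA, hUφ, rfl⟩
end
end
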